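/- arXiv:2302.05318 — 2 statements merged into one kernel-verified Lean document; each statement's English description precedes it below -/
import Mathlib

section
/- The solution operator S: L^∞(0,T;ℝ^{n×n}×ℝⁿ)→C([0,T];ℝⁿ), (a,ℓ)↦y, of the state equation is locally Lipschitz continuous: for every M>0 there exists a constant L_M>0 such that ‖S(a₁,ℓ₁)−S(a₂,ℓ₂)‖_{C([0,T];ℝⁿ)} ≤ L_M (‖a₁−a₂‖_{L^∞(0,T;ℝ^{n×n})}+‖ℓ₁−ℓ₂‖_{L^∞(0,T;ℝⁿ)}) for all (a₁,ℓ₁),(a₂,ℓ₂) with ‖(aₖ,ℓₖ)‖_{L^∞(0,T;ℝ^{n×n}×ℝⁿ)} ≤ M, k=1,2. -/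
open MeasureTheory Set Filter Topology
open scoped Interval

noncomputable section

/-- `ℝⁿ` with the Euclidean norm. -/
abbrev Vec (n : ℕ) := EuclideanSpace ℝ (Fin n)

/-- `ℝ^{n×n}` with the Frobenius (Euclidean) norm. -/
abbrev Mat (n : ℕ) := EuclideanSpace ℝ ((Fin n) × (Fin n))

/-- Matrix-vector multiplication `A * x`. -/
def mv {n : ℕ} (A : Mat n) (x : Vec n) : Vec n :=
  (WithLp.equiv 2 (Fin n → ℝ)).symm (fun i => ∑ j, A (i, j) * x j)

/-- `y ∈ C([0,T];ℝⁿ)` is a mild solution of the state equation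
`∂^γ y = f(a y + ℓ)`, `y(0) = y₀`, i.e. it satisfies the Volterra integral equation
`y(t) = y₀ + ∫₀ᵗ ((t-s)^(γ-1)/Γ(γ)) f(a(s) y(s) + ℓ(s)) ds` for all `t ∈ [0,T]`. -/
def IsMildSolution {n : ℕ} (γ T : ℝ) (y₀ : Vec n) (f : Vec n → Vec n)
    (a : ℝ → Mat n) (ℓ : ℝ → Vec n) (y : ℝ → Vec n) : Prop :=
  ContinuousOn y (Icc 0 T) ∧
  ∀ t ∈ Icc (0:ℝ) T,
    y t = y₀ + ∫ s in (0:ℝ)..t, ((t - s) ^ (γ - 1) / Real.Gamma γ) • f (mv (a s) (y s) + ℓ s)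

/-! ### Auxiliary kernel lemmas -/

section Aux

variable {γ : ℝ} {n : ℕ}

lemma ker_nonneg {t s : ℝ} (hst : s ≤ t) : 0 ≤ (t - s) ^ (γ - 1) :=
  Real.rpow_nonneg (by linarith) _

lemma ker_intervalIntegrable (hγ : 0 < γ) (t c d : ℝ) :
    IntervalIntegrable (fun s => (t - s) ^ (γ - 1)) volume c d := by
  have h := (intervalIntegral.intervalIntegrable_rpow' (a := t - c) (b := t - d)
    (r := γ - 1) (by linarith)).comp_sub_left t
  simpa using h

lemma ker_integral (hγ : 0 < γ) {t c d : ℝ} :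
    ∫ s in c..d, (t - s) ^ (γ - 1) = ((t - c) ^ γ - (t - d) ^ γ) / γ := by
  rw [intervalIntegral.integral_comp_sub_left (fun x => x ^ (γ - 1)) t,
    integral_rpow (Or.inl (by linarith))]
  norm_num

lemma ker_integral_le (hγ : 0 < γ) {t c d T : ℝ} (hc : 0 ≤ c) (hcd : c ≤ d) (hdt : d ≤ t)
    (htT : t ≤ T) :
    ∫ s in c..d, (t - s) ^ (γ - 1) ≤ T ^ γ / γ := by
  rw [ker_integral hγ]
  have h1 : (t - c) ^ γ ≤ T ^ γ :=
    Real.rpow_le_rpow (by linarith) (by linarith) hγ.le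
  have h2 : (0:ℝ) ≤ (t - d) ^ γ := Real.rpow_nonneg (by linarith) _
  gcongr
  linarith

lemma ker_smul_intervalIntegrable {E : Type*} [NormedAddCommGroup E] [NormedSpace ℝ E]
    (hγ : 0 < γ) {t c d : ℝ} (hcd : c ≤ d) (hdt : d ≤ t)
    {g : ℝ → E} (hg : AEStronglyMeasurable g (volume.restrict (Ι c d)))
    {K : ℝ} (hK : ∀ s ∈ Ι c d, ‖g s‖ ≤ K) :
    IntervalIntegrable (fun s => (t - s) ^ (γ - 1) • g s) volume c d := by
  have hker := ker_intervalIntegrable hγ t c d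
  refine IntervalIntegrable.mono_fun ((hker.mul_const (max K 0))) ?_ ?_
  · exact (hker.aestronglyMeasurable.mono_set
      (by rw [uIoc_of_le hcd])).smul hg
  · filter_upwards [ae_restrict_mem measurableSet_uIoc] with s hs
    have h1 : s ≤ t := by
      rw [uIoc_of_le hcd] at hs; exact hs.2.trans hdt
    have h2 : 0 ≤ (t - s) ^ (γ - 1) := ker_nonneg h1
    have h3 : ‖g s‖ ≤ max K 0 := le_max_of_le_left (hK s hs)
    simp only [norm_smul, Real.norm_eq_abs, abs_of_nonneg h2, norm_mul]
    have h4 : |max K 0| = max K 0 := abs_of_nonneg (le_max_right _ _)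
    rw [h4]
    exact mul_le_mul_of_nonneg_left h3 h2

lemma ker_mul_intervalIntegrable (hγ : 0 < γ) {T t c d : ℝ} (hc : 0 ≤ c) (hcd : c ≤ d)
    (hdt : d ≤ t) (htT : t ≤ T)
    {φ : ℝ → ℝ} (hφ : ContinuousOn φ (Icc 0 T)) :
    IntervalIntegrable (fun s => (t - s) ^ (γ - 1) * φ s) volume c d := by
  obtain ⟨K, hK⟩ := isCompact_Icc.exists_bound_of_continuousOn hφ
  have hsub : Ι c d ⊆ Icc 0 T := by
    rw [uIoc_of_le hcd]
    exact Ioc_subset_Icc_self.trans (Icc_subset_Icc hc (hdt.trans htT))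
  have := ker_smul_intervalIntegrable (E := ℝ) hγ hcd hdt
    ((hφ.mono hsub).aestronglyMeasurable measurableSet_uIoc)
    (K := K) (fun s hs => hK s (hsub hs))
  simpa [smul_eq_mul] using this

/-- Singular Gronwall inequality. -/
lemma gronwall_singular {T C : ℝ} (hγ0 : 0 < γ) (hγ1 : γ < 1) (hT : 0 < T) (hC : 0 ≤ C) :
    ∃ D : ℝ, 1 ≤ D ∧ ∀ A : ℝ, 0 ≤ A → ∀ φ : ℝ → ℝ,
      ContinuousOn φ (Icc 0 T) → (∀ t ∈ Icc (0:ℝ) T, 0 ≤ φ t) →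
      (∀ t ∈ Icc (0:ℝ) T, φ t ≤ A + C * ∫ s in (0:ℝ)..t, (t - s) ^ (γ - 1) * φ s) →
      ∀ t ∈ Icc (0:ℝ) T, φ t ≤ D * A := by
  set h : ℝ := min T ((γ / (2 * (C + 1))) ^ (γ⁻¹)) with hh_def
  have hh0 : 0 < h := lt_min hT (Real.rpow_pos_of_pos (by positivity) _)
  have hhT : h ≤ T := min_le_left _ _
  have hhalf : C * h ^ γ / γ ≤ 1 / 2 := by
    have h1 : h ^ γ ≤ γ / (2 * (C + 1)) := by
      calc h ^ γ ≤ ((γ / (2 * (C + 1))) ^ (γ⁻¹)) ^ γ :=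
            Real.rpow_le_rpow hh0.le (min_le_right _ _) hγ0.le
        _ = γ / (2 * (C + 1)) := Real.rpow_inv_rpow (by positivity) hγ0.ne'
    have h1' : h ^ γ * (2 * (C + 1)) ≤ γ := (le_div_iff₀ (by positivity)).mp h1
    have hp : 0 ≤ h ^ γ := Real.rpow_nonneg hh0.le _
    rw [div_le_iff₀ hγ0]
    nlinarith [mul_nonneg hC hp]
  set R : ℝ := 2 + 2 * C * T ^ γ / γ with hR_def
  have hTγ : 0 ≤ T ^ γ := Real.rpow_nonneg hT.le _
  have hR1 : (1:ℝ) ≤ R := by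
    have : 0 ≤ 2 * C * T ^ γ / γ := by positivity
    simp only [hR_def]; linarith
  set N : ℕ := ⌈T / h⌉₊ with hN_def
  have hTN : T ≤ (N : ℝ) * h := by
    have := Nat.le_ceil (T / h)
    calc T = T / h * h := by field_simp
      _ ≤ (N : ℝ) * h := by
          apply mul_le_mul_of_nonneg_right this hh0.le
  refine ⟨R ^ N, one_le_pow₀ hR1, ?_⟩
  intro A hA φ hφc hφ0 hφle
  have key : ∀ k : ℕ, ∀ t ∈ Icc (0:ℝ) (min ((k : ℝ) * h) T), φ t ≤ A * R ^ k := by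
    intro k
    induction k with
    | zero =>
      intro t ht
      simp only [Nat.cast_zero, zero_mul, min_eq_left hT.le] at ht
      have ht0 : t = 0 := le_antisymm ht.2 ht.1
      have := hφle 0 ⟨le_refl _, hT.le⟩
      simp only [intervalIntegral.integral_same, mul_zero, add_zero] at this
      simpa [ht0] using this
    | succ k IH =>
      intro t ht
      set u : ℝ := min (((k : ℝ) + 1) * h) T with hu_def
      have hu0 : 0 ≤ u := le_min (by positivity) hT.le
      have huT : u ≤ T := min_le_right _ _
      have huk : u ≤ ((k : ℝ) + 1) * h := min_le_left _ _
      have ht' : t ∈ Icc (0:ℝ) u := by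
        simpa [hu_def, Nat.cast_succ] using ht
      obtain ⟨ts, hts, hmax⟩ := isCompact_Icc.exists_isMaxOn (nonempty_Icc.mpr hu0)
        (hφc.mono (Icc_subset_Icc le_rfl huT))
      have htsT : ts ∈ Icc (0:ℝ) T := ⟨hts.1, hts.2.trans huT⟩
      have hmt : φ t ≤ φ ts := hmax ht'
      have hsucc : A * R ^ k ≤ A * R ^ (k + 1) :=
        mul_le_mul_of_nonneg_left (pow_le_pow_right₀ hR1 (Nat.le_succ k)) hA
      rcases le_or_gt ts ((k : ℝ) * h) with hcase | hcase
      · have := IH ts ⟨hts.1, le_min hcase htsT.2⟩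
        exact hmt.trans (this.trans hsucc)
      · set p : ℝ := max (ts - h) 0 with hp_def
        have hp0 : 0 ≤ p := le_max_right _ _
        have hpts : p ≤ ts := max_le (by linarith) hts.1
        have hpk : p ≤ (k : ℝ) * h := by
          apply max_le _ (by positivity)
          have := hts.2.trans huk
          linarith
        have htsp : ts - p ≤ h := by
          have : ts - h ≤ p := le_max_left _ _
          linarith
        have I1 : IntervalIntegrable (fun s => (ts - s) ^ (γ - 1) * φ s) volume 0 p :=
          ker_mul_intervalIntegrable hγ0 le_rfl hp0 hpts htsT.2 hφc
        have I2 : IntervalIntegrable (fun s => (ts - s) ^ (γ - 1) * φ s) volume p ts :=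
          ker_mul_intervalIntegrable hγ0 hp0 hpts le_rfl htsT.2 hφc
        have hsplit : ∫ s in (0:ℝ)..ts, (ts - s) ^ (γ - 1) * φ s
            = (∫ s in (0:ℝ)..p, (ts - s) ^ (γ - 1) * φ s)
              + ∫ s in p..ts, (ts - s) ^ (γ - 1) * φ s :=
          (intervalIntegral.integral_add_adjacent_intervals I1 I2).symm
        have hb1 : (∫ s in (0:ℝ)..p, (ts - s) ^ (γ - 1) * φ s)
            ≤ T ^ γ / γ * (A * R ^ k) := by
          have hmono : (∫ s in (0:ℝ)..p, (ts - s) ^ (γ - 1) * φ s)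
              ≤ ∫ s in (0:ℝ)..p, (ts - s) ^ (γ - 1) * (A * R ^ k) := by
            apply intervalIntegral.integral_mono_on hp0 I1
              ((ker_intervalIntegrable hγ0 ts 0 p).mul_const _)
            intro s hs
            have hsk : φ s ≤ A * R ^ k := IH s ⟨hs.1, le_min (hs.2.trans hpk)
              (hs.2.trans (hpts.trans htsT.2))⟩
            exact mul_le_mul_of_nonneg_left hsk (ker_nonneg (hs.2.trans hpts))
          rw [intervalIntegral.integral_mul_const] at hmono
          calc (∫ s in (0:ℝ)..p, (ts - s) ^ (γ - 1) * φ s)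
              ≤ (∫ s in (0:ℝ)..p, (ts - s) ^ (γ - 1)) * (A * R ^ k) := hmono
            _ ≤ T ^ γ / γ * (A * R ^ k) := by
                apply mul_le_mul_of_nonneg_right
                  (ker_integral_le hγ0 le_rfl hp0 hpts htsT.2) (by positivity)
        have hm0 : 0 ≤ φ ts := hφ0 ts htsT
        have hb2 : (∫ s in p..ts, (ts - s) ^ (γ - 1) * φ s)
            ≤ h ^ γ / γ * φ ts := by
          have hmono : (∫ s in p..ts, (ts - s) ^ (γ - 1) * φ s)
              ≤ ∫ s in p..ts, (ts - s) ^ (γ - 1) * φ ts := by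
            apply intervalIntegral.integral_mono_on hpts I2
              ((ker_intervalIntegrable hγ0 ts p ts).mul_const _)
            intro s hs
            have : φ s ≤ φ ts := hmax ⟨hp0.trans hs.1, hs.2.trans hts.2⟩
            exact mul_le_mul_of_nonneg_left this (ker_nonneg hs.2)
          rw [intervalIntegral.integral_mul_const] at hmono
          have hker_val : (∫ s in p..ts, (ts - s) ^ (γ - 1)) ≤ h ^ γ / γ := by
            rw [ker_integral hγ0]
            have e1 : (ts - p) ^ γ ≤ h ^ γ :=
              Real.rpow_le_rpow (by linarith) htsp hγ0.le
            have e2 : (0:ℝ) ≤ (ts - ts) ^ γ := Real.rpow_nonneg (by linarith) _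
            gcongr
            linarith
          calc (∫ s in p..ts, (ts - s) ^ (γ - 1) * φ s)
              ≤ (∫ s in p..ts, (ts - s) ^ (γ - 1)) * φ ts := hmono
            _ ≤ h ^ γ / γ * φ ts := mul_le_mul_of_nonneg_right hker_val hm0
        have hineq := hφle ts htsT
        rw [hsplit] at hineq
        have hCineq : φ ts ≤ A + C * (T ^ γ / γ * (A * R ^ k)) + 1/2 * φ ts := by
          have e1 : C * (h ^ γ / γ * φ ts) ≤ 1/2 * φ ts := by
            have e0 : C * (h ^ γ / γ * φ ts) = (C * h ^ γ / γ) * φ ts := by ring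
            rw [e0]
            exact mul_le_mul_of_nonneg_right hhalf hm0
          nlinarith [hb1, hb2, e1, hC]
        have hAk : A ≤ A * R ^ k := le_mul_of_one_le_right hA (one_le_pow₀ hR1)
        have hfin : A * R ^ (k + 1)
            = 2 * (A * R ^ k) + 2 * (C * (T ^ γ / γ * (A * R ^ k))) := by
          have e0 : R ^ (k+1) = R ^ k * R := pow_succ R k
          rw [e0, hR_def]
          field_simp
        have : φ ts ≤ A * R ^ (k + 1) := by
          rw [hfin]; linarith
        exact hmt.trans this
  intro t ht
  rw [mul_comm]
  exact key N t ⟨ht.1, le_min (ht.2.trans hTN) ht.2⟩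

/-! ### Lemmas about `mv` -/

lemma mv_apply (A : Mat n) (x : Vec n) (i : Fin n) : mv A x i = ∑ j, A (i, j) * x j := rfl

lemma mv_sub_sub (A B : Mat n) (x y : Vec n) :
    mv A x - mv B y = mv A (x - y) + mv (A - B) y := by
  ext i
  simp only [PiLp.add_apply, PiLp.sub_apply, mv_apply, mul_sub, sub_mul,
    Finset.sum_sub_distrib, Finset.sum_add_distrib]
  ring

lemma mv_norm_le (A : Mat n) (x : Vec n) : ‖mv A x‖ ≤ ‖A‖ * ‖x‖ := by
  have hA : 0 ≤ ‖A‖ := norm_nonneg _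
  have hx : 0 ≤ ‖x‖ := norm_nonneg _
  rw [← Real.sqrt_sq (mul_nonneg hA hx), EuclideanSpace.norm_eq]
  apply Real.sqrt_le_sqrt
  have hsq : (‖A‖ * ‖x‖) ^ 2 = (∑ p : Fin n × Fin n, (A p) ^ 2) * (∑ j, (x j) ^ 2) := by
    rw [mul_pow, EuclideanSpace.norm_eq, EuclideanSpace.norm_eq,
      Real.sq_sqrt (by positivity), Real.sq_sqrt (by positivity)]
    simp [sq_abs]
  rw [hsq]
  have hstep : ∀ i : Fin n, ‖mv A x i‖ ^ 2 ≤ (∑ j, A (i, j) ^ 2) * (∑ j, (x j) ^ 2) := by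
    intro i
    rw [mv_apply, Real.norm_eq_abs, sq_abs]
    exact Finset.sum_mul_sq_le_sq_mul_sq _ _ _
  calc ∑ i, ‖mv A x i‖ ^ 2 ≤ ∑ i, (∑ j, A (i, j) ^ 2) * (∑ j, (x j) ^ 2) :=
        Finset.sum_le_sum fun i _ => hstep i
    _ = (∑ p : Fin n × Fin n, (A p) ^ 2) * (∑ j, (x j) ^ 2) := by
        rw [← Finset.sum_mul, Fintype.sum_prod_type]

lemma continuous_mv : Continuous (fun p : Mat n × Vec n => mv p.1 p.2) := by
  have h1 : ∀ ij : Fin n × Fin n, Continuous (fun p : Mat n × Vec n => p.1 ij) := fun ij =>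
    (continuous_apply ij).comp ((PiLp.continuous_ofLp 2 _).comp continuous_fst)
  have h2 : ∀ j : Fin n, Continuous (fun p : Mat n × Vec n => p.2 j) := fun j =>
    (continuous_apply j).comp ((PiLp.continuous_ofLp 2 _).comp continuous_snd)
  exact (PiLp.continuous_toLp 2 (fun _ : Fin n => ℝ)).comp
    (continuous_pi fun i => continuous_finset_sum _ fun j _ => (h1 (i, j)).mul (h2 j))

/-! ### Measurability and integral estimates for the mild solution integrand -/

lemma g_asm {T : ℝ} {a : ℝ → Mat n} {ℓ : ℝ → Vec n} {y : ℝ → Vec n} {f : Vec n → Vec n}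
    (hfc : Continuous f) (ha : Measurable a) (hℓ : Measurable ℓ)
    (hy : ContinuousOn y (Icc 0 T)) {c d : ℝ} (hsub : Ι c d ⊆ Icc 0 T) :
    AEStronglyMeasurable (fun s => f (mv (a s) (y s) + ℓ s)) (volume.restrict (Ι c d)) := by
  have hy' : AEStronglyMeasurable y (volume.restrict (Ι c d)) :=
    (hy.mono hsub).aestronglyMeasurable measurableSet_uIoc
  have hmv : AEStronglyMeasurable (fun s => mv (a s) (y s)) (volume.restrict (Ι c d)) :=
    continuous_mv.comp_aestronglyMeasurable (ha.aestronglyMeasurable.prodMk hy')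
  exact hfc.comp_aestronglyMeasurable (hmv.add hℓ.aestronglyMeasurable)

lemma mild_integrand_intervalIntegrable (hγ0 : 0 < γ) {t : ℝ} (ht : 0 ≤ t)
    {g : ℝ → Vec n} (hg : AEStronglyMeasurable g (volume.restrict (Ι 0 t)))
    {K : ℝ} (hK : ∀ s ∈ Ι (0:ℝ) t, ‖g s‖ ≤ K) :
    IntervalIntegrable (fun s => ((t - s) ^ (γ - 1) / Real.Gamma γ) • g s) volume 0 t := by
  have h := (ker_smul_intervalIntegrable hγ0 ht le_rfl hg hK).smul (Real.Gamma γ)⁻¹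
  have heq : (fun s => (Real.Gamma γ)⁻¹ • ((t - s) ^ (γ - 1) • g s))
      = fun s => ((t - s) ^ (γ - 1) / Real.Gamma γ) • g s := by
    funext s; rw [smul_smul, div_eq_mul_inv, mul_comm]
  have h2 : IntervalIntegrable (fun s => (Real.Gamma γ)⁻¹ • ((t - s) ^ (γ - 1) • g s))
      volume 0 t := h
  rwa [heq] at h2

lemma norm_sol_integral_le (hγ0 : 0 < γ) {T t : ℝ} (ht : t ∈ Icc (0:ℝ) T)
    {g : ℝ → Vec n} (hg : AEStronglyMeasurable g (volume.restrict (Ι 0 t)))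
    {c₁ c₂ : ℝ} (hc₁ : 0 ≤ c₁) (hc₂ : 0 ≤ c₂) {ψ : ℝ → ℝ} (hψ : ContinuousOn ψ (Icc 0 T))
    (hψ0 : ∀ s ∈ Icc (0:ℝ) T, 0 ≤ ψ s)
    (hbound : ∀ s ∈ Icc (0:ℝ) t, ‖g s‖ ≤ c₁ + c₂ * ψ s) :
    ‖∫ s in (0:ℝ)..t, ((t - s) ^ (γ - 1) / Real.Gamma γ) • g s‖
      ≤ c₁ / Real.Gamma γ * (T ^ γ / γ)
        + c₂ / Real.Gamma γ * ∫ s in (0:ℝ)..t, (t - s) ^ (γ - 1) * ψ s := by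
  obtain ⟨h0t, htT⟩ := ht
  have hΓ : 0 < Real.Gamma γ := Real.Gamma_pos_of_pos hγ0
  have hIsub : Ι (0:ℝ) t ⊆ Icc 0 t := by
    rw [uIoc_of_le h0t]; exact Ioc_subset_Icc_self
  have hIccsub : Icc (0:ℝ) t ⊆ Icc 0 T := Icc_subset_Icc le_rfl htT
  obtain ⟨Kψ, hKψ⟩ := isCompact_Icc.exists_bound_of_continuousOn (hψ.mono hIccsub)
  have hgK : ∀ s ∈ Ι (0:ℝ) t, ‖g s‖ ≤ c₁ + c₂ * Kψ := by
    intro s hs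
    have hs' := hIsub hs
    have hb := hbound s hs'
    have h2 : ψ s ≤ Kψ := (le_abs_self _).trans (by simpa using hKψ s hs')
    nlinarith [hψ0 s (hIccsub hs')]
  have Ig := mild_integrand_intervalIntegrable hγ0 h0t hg hgK
  have hψc' : ContinuousOn (fun s => (c₁ + c₂ * ψ s) / Real.Gamma γ) (Icc 0 T) :=
    ((continuousOn_const.add (continuousOn_const.mul hψ)).div_const _)
  have Ibig : IntervalIntegrable
      (fun s => (t - s) ^ (γ - 1) * ((c₁ + c₂ * ψ s) / Real.Gamma γ)) volume 0 t :=
    ker_mul_intervalIntegrable hγ0 le_rfl h0t le_rfl htT hψc'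
  have Iψ : IntervalIntegrable (fun s => (t - s) ^ (γ - 1) * ψ s) volume 0 t :=
    ker_mul_intervalIntegrable hγ0 le_rfl h0t le_rfl htT hψ
  have step1 : ‖∫ s in (0:ℝ)..t, ((t - s) ^ (γ - 1) / Real.Gamma γ) • g s‖
      ≤ ∫ s in (0:ℝ)..t, (t - s) ^ (γ - 1) * ((c₁ + c₂ * ψ s) / Real.Gamma γ) := by
    calc ‖∫ s in (0:ℝ)..t, ((t - s) ^ (γ - 1) / Real.Gamma γ) • g s‖
        ≤ ∫ s in (0:ℝ)..t, ‖((t - s) ^ (γ - 1) / Real.Gamma γ) • g s‖ :=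
          intervalIntegral.norm_integral_le_integral_norm h0t
      _ ≤ ∫ s in (0:ℝ)..t, (t - s) ^ (γ - 1) * ((c₁ + c₂ * ψ s) / Real.Gamma γ) := by
          apply intervalIntegral.integral_mono_on h0t Ig.norm Ibig
          intro s hs
          have hk : 0 ≤ (t - s) ^ (γ - 1) := ker_nonneg hs.2
          rw [norm_smul, Real.norm_eq_abs, abs_of_nonneg (by positivity)]
          calc (t - s) ^ (γ - 1) / Real.Gamma γ * ‖g s‖
              ≤ (t - s) ^ (γ - 1) / Real.Gamma γ * (c₁ + c₂ * ψ s) :=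
                mul_le_mul_of_nonneg_left (hbound s hs) (by positivity)
            _ = (t - s) ^ (γ - 1) * ((c₁ + c₂ * ψ s) / Real.Gamma γ) := by ring
  have step2 : ∫ s in (0:ℝ)..t, (t - s) ^ (γ - 1) * ((c₁ + c₂ * ψ s) / Real.Gamma γ)
      = c₁ / Real.Gamma γ * (∫ s in (0:ℝ)..t, (t - s) ^ (γ - 1))
        + c₂ / Real.Gamma γ * ∫ s in (0:ℝ)..t, (t - s) ^ (γ - 1) * ψ s := by
    rw [← intervalIntegral.integral_const_mul, ← intervalIntegral.integral_const_mul,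
      ← intervalIntegral.integral_add
        ((ker_intervalIntegrable hγ0 t 0 t).const_mul _) (Iψ.const_mul _)]
    congr 1; funext s; ring
  have step3 : c₁ / Real.Gamma γ * (∫ s in (0:ℝ)..t, (t - s) ^ (γ - 1))
      ≤ c₁ / Real.Gamma γ * (T ^ γ / γ) :=
    mul_le_mul_of_nonneg_left (ker_integral_le hγ0 le_rfl h0t le_rfl htT) (by positivity)
  linarith [step1, step2.le, step2.ge, step3]

end Aux

/-- The solution operator `S : L^∞(0,T;ℝ^{n×n}×ℝⁿ) → C([0,T];ℝⁿ)` of the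
state equation is locally Lipschitz continuous: for every `M > 0` there is `L_M > 0` such
that `‖S(a₁,ℓ₁) - S(a₂,ℓ₂)‖_{C([0,T];ℝⁿ)} ≤ L_M (‖a₁-a₂‖_{L^∞} + ‖ℓ₁-ℓ₂‖_{L^∞})` whenever
`‖(aₖ,ℓₖ)‖_{L^∞} ≤ M`, `k = 1,2`.  (The `L^∞`-norms of the differences are encoded through
arbitrary uniform bounds `Ca`, `Cl` on `[0,T]`.) -/
theorem stmt_4 {n : ℕ} (γ T L : ℝ) (hγ : γ ∈ Ioo (0:ℝ) 1) (hT : 0 < T) (hL : 0 < L)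
    (y₀ : Vec n) (f : Vec n → Vec n)
    (hf : ∀ z₁ z₂ : Vec n, ‖f z₁ - f z₂‖ ≤ L * ‖z₁ - z₂‖) :
    ∀ M > (0:ℝ), ∃ LM : ℝ, 0 < LM ∧
      ∀ a₁ a₂ : ℝ → Mat n, ∀ ℓ₁ ℓ₂ : ℝ → Vec n,
        Measurable a₁ → Measurable a₂ → Measurable ℓ₁ → Measurable ℓ₂ →
        (∀ t ∈ Icc (0:ℝ) T, ‖a₁ t‖ ≤ M ∧ ‖ℓ₁ t‖ ≤ M) →
        (∀ t ∈ Icc (0:ℝ) T, ‖a₂ t‖ ≤ M ∧ ‖ℓ₂ t‖ ≤ M) →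
        ∀ y₁ y₂ : ℝ → Vec n,
          IsMildSolution γ T y₀ f a₁ ℓ₁ y₁ → IsMildSolution γ T y₀ f a₂ ℓ₂ y₂ →
          ∀ Ca Cl : ℝ,
            (∀ t ∈ Icc (0:ℝ) T, ‖a₁ t - a₂ t‖ ≤ Ca) →
            (∀ t ∈ Icc (0:ℝ) T, ‖ℓ₁ t - ℓ₂ t‖ ≤ Cl) →
            ∀ t ∈ Icc (0:ℝ) T, ‖y₁ t - y₂ t‖ ≤ LM * (Ca + Cl) := by
  obtain ⟨hγ0, hγ1⟩ := hγ
  intro M hM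
  have hΓ : 0 < Real.Gamma γ := Real.Gamma_pos_of_pos hγ0
  have hTγ : 0 < T ^ γ := Real.rpow_pos_of_pos hT γ
  have hfc : Continuous f := by
    have hlip : LipschitzWith (Real.toNNReal L) f := by
      apply LipschitzWith.of_dist_le_mul
      intro z₁ z₂
      rw [dist_eq_norm, dist_eq_norm]
      simpa [Real.coe_toNNReal L hL.le] using hf z₁ z₂
    exact hlip.continuous
  -- `‖f z‖ ≤ ‖f 0‖ + L * ‖z‖`
  have hfz : ∀ z : Vec n, ‖f z‖ ≤ ‖f 0‖ + L * ‖z‖ := by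
    intro z
    have h1 := hf z 0
    have h2 := norm_sub_norm_le (f z) (f 0)
    simp only [sub_zero] at h1
    linarith
  set C : ℝ := L * M / Real.Gamma γ with hC_def
  have hC : 0 ≤ C := by positivity
  obtain ⟨D, hD1, hD⟩ := gronwall_singular hγ0 hγ1 hT hC
  set c₁ : ℝ := ‖f 0‖ + L * M with hc1_def
  have hc₁0 : 0 ≤ c₁ := by positivity
  set A₀ : ℝ := ‖y₀‖ + c₁ / Real.Gamma γ * (T ^ γ / γ) with hA0_def
  have hA₀0 : 0 ≤ A₀ := by positivity
  set B : ℝ := D * A₀ with hB_def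
  have hB0 : 0 ≤ B := by positivity
  refine ⟨D * (L / Real.Gamma γ * (T ^ γ / γ)) * (B + 1), by positivity, ?_⟩
  intro a₁ a₂ ℓ₁ ℓ₂ ha₁ ha₂ hℓ₁ hℓ₂ hM₁ hM₂ y₁ y₂ hy₁ hy₂ Ca Cl hCa hCl
  have hCa0 : 0 ≤ Ca := le_trans (norm_nonneg _) (hCa 0 ⟨le_rfl, hT.le⟩)
  have hCl0 : 0 ≤ Cl := le_trans (norm_nonneg _) (hCl 0 ⟨le_rfl, hT.le⟩)
  -- a priori bound on mild solutions
  have apriori : ∀ (a : ℝ → Mat n) (ℓ : ℝ → Vec n) (y : ℝ → Vec n), Measurable a →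
      Measurable ℓ → (∀ t ∈ Icc (0:ℝ) T, ‖a t‖ ≤ M ∧ ‖ℓ t‖ ≤ M) →
      IsMildSolution γ T y₀ f a ℓ y → ∀ t ∈ Icc (0:ℝ) T, ‖y t‖ ≤ B := by
    intro a ℓ y ha hℓ haM hy
    obtain ⟨hyc, hyeq⟩ := hy
    rw [hB_def]
    apply hD A₀ hA₀0 (fun s => ‖y s‖) hyc.norm (fun s _ => norm_nonneg _)
    intro t ht
    have hIsub : Ι (0:ℝ) t ⊆ Icc 0 T := by
      rw [uIoc_of_le ht.1]
      exact Ioc_subset_Icc_self.trans (Icc_subset_Icc le_rfl ht.2)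
    have hgasm := g_asm hfc ha hℓ hyc hIsub
    have hbound : ∀ s ∈ Icc (0:ℝ) t, ‖f (mv (a s) (y s) + ℓ s)‖ ≤ c₁ + (L * M) * ‖y s‖ := by
      intro s hs
      have hsT : s ∈ Icc (0:ℝ) T := ⟨hs.1, hs.2.trans ht.2⟩
      have hz : ‖mv (a s) (y s) + ℓ s‖ ≤ M * ‖y s‖ + M := by
        calc ‖mv (a s) (y s) + ℓ s‖ ≤ ‖mv (a s) (y s)‖ + ‖ℓ s‖ := norm_add_le _ _
          _ ≤ ‖a s‖ * ‖y s‖ + M := add_le_add (mv_norm_le _ _) (haM s hsT).2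
          _ ≤ M * ‖y s‖ + M := by
              have := mul_le_mul_of_nonneg_right (haM s hsT).1 (norm_nonneg (y s))
              linarith
      calc ‖f (mv (a s) (y s) + ℓ s)‖ ≤ ‖f 0‖ + L * ‖mv (a s) (y s) + ℓ s‖ := hfz _
        _ ≤ ‖f 0‖ + L * (M * ‖y s‖ + M) :=
            add_le_add le_rfl (mul_le_mul_of_nonneg_left hz hL.le)
        _ = c₁ + (L * M) * ‖y s‖ := by rw [hc1_def]; ring
    have key := norm_sol_integral_le hγ0 ht hgasm hc₁0 (by positivity : (0:ℝ) ≤ L * M)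
      hyc.norm (fun s _ => norm_nonneg _) hbound
    rw [hyeq t ht]
    calc ‖y₀ + ∫ s in (0:ℝ)..t, ((t - s) ^ (γ - 1) / Real.Gamma γ) • f (mv (a s) (y s) + ℓ s)‖
        ≤ ‖y₀‖ + ‖∫ s in (0:ℝ)..t, ((t - s) ^ (γ - 1) / Real.Gamma γ) •
            f (mv (a s) (y s) + ℓ s)‖ := norm_add_le _ _
      _ ≤ ‖y₀‖ + (c₁ / Real.Gamma γ * (T ^ γ / γ)
            + L * M / Real.Gamma γ * ∫ s in (0:ℝ)..t, (t - s) ^ (γ - 1) * ‖y s‖) := by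
          linarith [key]
      _ = A₀ + C * ∫ s in (0:ℝ)..t, (t - s) ^ (γ - 1) * ‖y s‖ := by
          rw [hA0_def, hC_def]; ring
  have hB₁ := apriori a₁ ℓ₁ y₁ ha₁ hℓ₁ hM₁ hy₁
  have hB₂ := apriori a₂ ℓ₂ y₂ ha₂ hℓ₂ hM₂ hy₂
  obtain ⟨hy₁c, hy₁eq⟩ := hy₁
  obtain ⟨hy₂c, hy₂eq⟩ := hy₂
  set c₁' : ℝ := L * (Ca * B + Cl) with hc1'_def
  have hc₁'0 : 0 ≤ c₁' := by
    apply mul_nonneg hL.le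
    positivity
  -- main estimate: φ := ‖y₁ - y₂‖ satisfies the Gronwall inequality
  have main : ∀ t ∈ Icc (0:ℝ) T, ‖y₁ t - y₂ t‖ ≤ D * (c₁' / Real.Gamma γ * (T ^ γ / γ)) := by
    apply hD _ (by positivity) _ ((hy₁c.sub hy₂c).norm) (fun s _ => norm_nonneg _)
    intro t ht
    have hIsub : Ι (0:ℝ) t ⊆ Icc 0 T := by
      rw [uIoc_of_le ht.1]
      exact Ioc_subset_Icc_self.trans (Icc_subset_Icc le_rfl ht.2)
    have hg₁asm := g_asm hfc ha₁ hℓ₁ hy₁c hIsub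
    have hg₂asm := g_asm hfc ha₂ hℓ₂ hy₂c hIsub
    -- uniform bounds for the two integrands
    have hbnd : ∀ (a : ℝ → Mat n) (ℓ : ℝ → Vec n) (y : ℝ → Vec n),
        (∀ t ∈ Icc (0:ℝ) T, ‖a t‖ ≤ M ∧ ‖ℓ t‖ ≤ M) →
        (∀ t ∈ Icc (0:ℝ) T, ‖y t‖ ≤ B) →
        ∀ s ∈ Ι (0:ℝ) t, ‖f (mv (a s) (y s) + ℓ s)‖ ≤ ‖f 0‖ + L * (M * B + M) := by
      intro a ℓ y haM hyB s hs
      have hsT : s ∈ Icc (0:ℝ) T := hIsub hs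
      have hz : ‖mv (a s) (y s) + ℓ s‖ ≤ M * B + M := by
        calc ‖mv (a s) (y s) + ℓ s‖ ≤ ‖mv (a s) (y s)‖ + ‖ℓ s‖ := norm_add_le _ _
          _ ≤ ‖a s‖ * ‖y s‖ + M := add_le_add (mv_norm_le _ _) (haM s hsT).2
          _ ≤ M * B + M := by
              have := mul_le_mul (haM s hsT).1 (hyB s hsT) (norm_nonneg _) hM.le
              linarith
      calc ‖f (mv (a s) (y s) + ℓ s)‖ ≤ ‖f 0‖ + L * ‖mv (a s) (y s) + ℓ s‖ := hfz _
        _ ≤ ‖f 0‖ + L * (M * B + M) :=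
            add_le_add le_rfl (mul_le_mul_of_nonneg_left hz hL.le)
    have J₁ := mild_integrand_intervalIntegrable hγ0 ht.1 hg₁asm (hbnd a₁ ℓ₁ y₁ hM₁ hB₁)
    have J₂ := mild_integrand_intervalIntegrable hγ0 ht.1 hg₂asm (hbnd a₂ ℓ₂ y₂ hM₂ hB₂)
    have hdiff : y₁ t - y₂ t = ∫ s in (0:ℝ)..t, ((t - s) ^ (γ - 1) / Real.Gamma γ) •
        (f (mv (a₁ s) (y₁ s) + ℓ₁ s) - f (mv (a₂ s) (y₂ s) + ℓ₂ s)) := by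
      rw [hy₁eq t ht, hy₂eq t ht, add_sub_add_left_eq_sub,
        ← intervalIntegral.integral_sub J₁ J₂]
      congr 1
      funext s
      rw [← smul_sub]
    have hboundd : ∀ s ∈ Icc (0:ℝ) t,
        ‖f (mv (a₁ s) (y₁ s) + ℓ₁ s) - f (mv (a₂ s) (y₂ s) + ℓ₂ s)‖
          ≤ c₁' + (L * M) * ‖y₁ s - y₂ s‖ := by
      intro s hs
      have hsT : s ∈ Icc (0:ℝ) T := ⟨hs.1, hs.2.trans ht.2⟩
      have hzz : ‖(mv (a₁ s) (y₁ s) + ℓ₁ s) - (mv (a₂ s) (y₂ s) + ℓ₂ s)‖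
          ≤ M * ‖y₁ s - y₂ s‖ + (Ca * B + Cl) := by
        have e1 : (mv (a₁ s) (y₁ s) + ℓ₁ s) - (mv (a₂ s) (y₂ s) + ℓ₂ s)
            = (mv (a₁ s) (y₁ s - y₂ s) + mv (a₁ s - a₂ s) (y₂ s)) + (ℓ₁ s - ℓ₂ s) := by
          rw [← mv_sub_sub]
          abel
        rw [e1]
        calc ‖(mv (a₁ s) (y₁ s - y₂ s) + mv (a₁ s - a₂ s) (y₂ s)) + (ℓ₁ s - ℓ₂ s)‖
            ≤ ‖mv (a₁ s) (y₁ s - y₂ s)‖ + ‖mv (a₁ s - a₂ s) (y₂ s)‖ + ‖ℓ₁ s - ℓ₂ s‖ :=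
              norm_add₃_le
          _ ≤ ‖a₁ s‖ * ‖y₁ s - y₂ s‖ + ‖a₁ s - a₂ s‖ * ‖y₂ s‖ + Cl :=
              add_le_add (add_le_add (mv_norm_le _ _) (mv_norm_le _ _)) (hCl s hsT)
          _ ≤ M * ‖y₁ s - y₂ s‖ + Ca * B + Cl := by
              have e2 := mul_le_mul_of_nonneg_right (hM₁ s hsT).1 (norm_nonneg (y₁ s - y₂ s))
              have e3 := mul_le_mul (hCa s hsT) (hB₂ s hsT) (norm_nonneg _) hCa0
              linarith
          _ = M * ‖y₁ s - y₂ s‖ + (Ca * B + Cl) := by ring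
      calc ‖f (mv (a₁ s) (y₁ s) + ℓ₁ s) - f (mv (a₂ s) (y₂ s) + ℓ₂ s)‖
          ≤ L * ‖(mv (a₁ s) (y₁ s) + ℓ₁ s) - (mv (a₂ s) (y₂ s) + ℓ₂ s)‖ := hf _ _
        _ ≤ L * (M * ‖y₁ s - y₂ s‖ + (Ca * B + Cl)) :=
            mul_le_mul_of_nonneg_left hzz hL.le
        _ = c₁' + (L * M) * ‖y₁ s - y₂ s‖ := by rw [hc1'_def]; ring
    have key := norm_sol_integral_le hγ0 ht (hg₁asm.sub hg₂asm) hc₁'0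
      (by positivity : (0:ℝ) ≤ L * M) ((hy₁c.sub hy₂c).norm) (fun s _ => norm_nonneg _)
      hboundd
    rw [Pi.sub_apply, hdiff]
    calc ‖∫ s in (0:ℝ)..t, ((t - s) ^ (γ - 1) / Real.Gamma γ) •
          (f (mv (a₁ s) (y₁ s) + ℓ₁ s) - f (mv (a₂ s) (y₂ s) + ℓ₂ s))‖
        ≤ c₁' / Real.Gamma γ * (T ^ γ / γ)
          + L * M / Real.Gamma γ * ∫ s in (0:ℝ)..t, (t - s) ^ (γ - 1) * ‖y₁ s - y₂ s‖ := key
      _ = c₁' / Real.Gamma γ * (T ^ γ / γ)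
          + C * ∫ s in (0:ℝ)..t, (t - s) ^ (γ - 1) * ‖y₁ s - y₂ s‖ := by rw [hC_def]
  intro t ht
  have h1 := main t ht
  have h2 : D * (c₁' / Real.Gamma γ * (T ^ γ / γ))
      ≤ D * (L / Real.Gamma γ * (T ^ γ / γ)) * (B + 1) * (Ca + Cl) := by
    have e1 : D * (c₁' / Real.Gamma γ * (T ^ γ / γ))
        = D * (L / Real.Gamma γ * (T ^ γ / γ)) * (Ca * B + Cl) := by
      rw [hc1'_def]; ring
    have e2 : Ca * B + Cl ≤ (B + 1) * (Ca + Cl) := by nlinarith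
    rw [e1, mul_assoc (D * (L / Real.Gamma γ * (T ^ γ / γ)))]
    have e3 : (0:ℝ) ≤ D * (L / Real.Gamma γ * (T ^ γ / γ)) := by positivity
    calc D * (L / Real.Gamma γ * (T ^ γ / γ)) * (Ca * B + Cl)
        ≤ D * (L / Real.Gamma γ * (T ^ γ / γ)) * ((B + 1) * (Ca + Cl)) :=
          mul_le_mul_of_nonneg_left e2 e3
      _ = _ := by ring
  linarith
end
end

section
/- The solution operator S: L^∞(0,T;ℝ^{n×n}×ℝⁿ)→C([0,T];ℝⁿ) is directionally differentiable: for all (a,ℓ),(δa,δℓ)∈L^∞(0,T;ℝ^{n×n})×L^∞(0,T;ℝⁿ), with y:=S(a,ℓ) and y^τ:=S(a+τδa, ℓ+τδℓ), one has ‖(y^τ−y)/τ − δy‖_{C([0,T];ℝⁿ)} → 0 as τ↓0, where δy∈C([0,T];ℝⁿ) is the unique solution of δy(t)=∫₀ᵗ ((t−s)^{γ−1}/Γ(γ)) f'(a(s)y(s)+ℓ(s); a(s)δy(s)+δa(s)y(s)+δℓ(s)) ds, t∈[0,T]. -/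
open MeasureTheory Set Filter Topology

noncomputable section

set_option maxHeartbeats 2000000

/-- `δy` solves the "linearized" integral equation
`δy(t) = ∫₀ᵗ ((t-s)^(γ-1)/Γ(γ)) f'(a y + ℓ; a δy + δa y + δℓ)(s) ds`, `t ∈ [0,T]`,
where `f' z d` denotes the directional derivative of `f` at `z` in direction `d`. -/
def IsLinSolution {n : ℕ} (γ T : ℝ) (f' : Vec n → Vec n → Vec n)
    (a : ℝ → Mat n) (ℓ : ℝ → Vec n) (y : ℝ → Vec n)
    (δa : ℝ → Mat n) (δℓ : ℝ → Vec n) (δy : ℝ → Vec n) : Prop :=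
  ContinuousOn δy (Icc 0 T) ∧
  ∀ t ∈ Icc (0:ℝ) T,
    δy t = ∫ s in (0:ℝ)..t, ((t - s) ^ (γ - 1) / Real.Gamma γ) •
      f' (mv (a s) (y s) + ℓ s) (mv (a s) (δy s) + mv (δa s) (y s) + δℓ s)

namespace S6


lemma ker_ii {γ : ℝ} (hγ : -1 < γ - 1) (t : ℝ) :
    IntervalIntegrable (fun s => (t - s) ^ (γ - 1)) volume 0 t := by
  simpa using (intervalIntegral.intervalIntegrable_rpow' (a := t) (b := 0) hγ).comp_sub_left t

lemma ker_integral {γ : ℝ} (hγ0 : 0 < γ) {m t : ℝ} (hmt : m ≤ t) :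
    ∫ s in m..t, (t - s) ^ (γ - 1) = (t - m) ^ γ / γ := by
  rw [show (fun s => (t - s) ^ (γ - 1)) = (fun s => ((fun x => x ^ (γ - 1)) (t - s))) from rfl]
  rw [intervalIntegral.integral_comp_sub_left (fun x : ℝ => x ^ (γ - 1)) t, sub_self,
    integral_rpow (Or.inl (by linarith))]
  have h1 : γ - 1 + 1 = γ := by ring
  rw [h1, Real.zero_rpow hγ0.ne', sub_zero]

lemma ker_smul_ii {γ : ℝ} (hγ : -1 < γ - 1) {t : ℝ} (ht : 0 ≤ t)
    {E : Type*} [NormedAddCommGroup E] [NormedSpace ℝ E]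
    {F : ℝ → E} (hF : AEStronglyMeasurable F (volume.restrict (Ioc 0 t)))
    {M : ℝ} (hM : ∀ s ∈ Ioc (0:ℝ) t, ‖F s‖ ≤ M) :
    IntervalIntegrable (fun s => (t - s) ^ (γ - 1) • F s) volume 0 t := by
  rw [intervalIntegrable_iff_integrableOn_Ioc_of_le ht]
  have hker : IntegrableOn (fun s => (t - s) ^ (γ - 1) * M) (Ioc 0 t) := by
    have h := (ker_ii hγ t).mul_const M
    rwa [intervalIntegrable_iff_integrableOn_Ioc_of_le ht] at h
  have hkm : AEStronglyMeasurable (fun s => (t - s) ^ (γ - 1)) (volume.restrict (Ioc 0 t)) := by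
    exact ((measurable_id.const_sub t).pow_const _).aestronglyMeasurable
  refine hker.integrable.mono' (hkm.smul hF) ?_
  filter_upwards [ae_restrict_mem measurableSet_Ioc] with s hs
  have h0 : (0:ℝ) ≤ (t - s) ^ (γ - 1) := Real.rpow_nonneg (by linarith [hs.2]) _
  rw [norm_smul, Real.norm_eq_abs, abs_of_nonneg h0]
  exact mul_le_mul_of_nonneg_left (hM s hs) h0

lemma norm_ker_integral_le {γ : ℝ} (hγ : -1 < γ - 1) {t : ℝ} (ht : 0 ≤ t)
    {E : Type*} [NormedAddCommGroup E] [NormedSpace ℝ E]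
    {F : ℝ → E} {G : ℝ → ℝ}
    (hG : IntervalIntegrable (fun s => (t - s) ^ (γ - 1) * G s) volume 0 t)
    (hFG : ∀ s ∈ Ioc (0:ℝ) t, ‖F s‖ ≤ G s) :
    ‖∫ s in (0:ℝ)..t, (t - s) ^ (γ - 1) • F s‖ ≤ ∫ s in (0:ℝ)..t, (t - s) ^ (γ - 1) * G s := by
  have habs : ∀ᵐ s ∂(volume.restrict (uIoc 0 t)),
      ‖(t - s) ^ (γ - 1) • F s‖ ≤ (t - s) ^ (γ - 1) * G s := by
    rw [uIoc_of_le ht]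
    filter_upwards [ae_restrict_mem measurableSet_Ioc] with s hs
    have h0 : (0:ℝ) ≤ (t - s) ^ (γ - 1) := Real.rpow_nonneg (by linarith [hs.2]) _
    rw [norm_smul, Real.norm_eq_abs, abs_of_nonneg h0]
    exact mul_le_mul_of_nonneg_left (hFG s hs) h0
  refine (intervalIntegral.norm_integral_le_abs_of_norm_le habs hG).trans_eq ?_
  rw [abs_of_nonneg]
  rw [intervalIntegral.integral_of_le ht]
  apply MeasureTheory.setIntegral_nonneg measurableSet_Ioc
  intro s hs
  have h0 : (0:ℝ) ≤ (t - s) ^ (γ - 1) := Real.rpow_nonneg (by linarith [hs.2]) _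
  exact mul_nonneg h0 ((norm_nonneg (F s)).trans (hFG s hs))

lemma exp_ker_integral_le {γ : ℝ} (hγ : γ ∈ Ioo (0:ℝ) 1) {t lam : ℝ} (ht : 0 ≤ t)
    (hlam : 0 < lam) :
    ∫ s in (0:ℝ)..t, (t - s) ^ (γ - 1) * Real.exp (lam * s) ≤
      Real.exp (lam * t) * (Real.Gamma γ / lam ^ γ) := by
  obtain ⟨hγ0, hγ1⟩ := hγ
  have key : (∫ s in (0:ℝ)..t, (t - s) ^ (γ - 1) * Real.exp (lam * s)) =
      Real.exp (lam * t) * ∫ x in (0:ℝ)..t, x ^ (γ - 1) * Real.exp (-(lam * x)) := by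
    rw [← intervalIntegral.integral_const_mul]
    rw [show (fun s => (t - s) ^ (γ - 1) * Real.exp (lam * s)) =
        (fun s => ((fun x => Real.exp (lam * t) * (x ^ (γ - 1) * Real.exp (-(lam * x)))) (t - s)))
        from ?_]
    · rw [intervalIntegral.integral_comp_sub_left
        (fun x : ℝ => Real.exp (lam * t) * (x ^ (γ - 1) * Real.exp (-(lam * x)))) t, sub_self,
        sub_zero]
    · funext s
      have h1 : Real.exp (lam * t) * Real.exp (-(lam * (t - s))) = Real.exp (lam * s) := by
        rw [← Real.exp_add]; congr 1; ring
      show (t - s) ^ (γ - 1) * Real.exp (lam * s) =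
        Real.exp (lam * t) * ((t - s) ^ (γ - 1) * Real.exp (-(lam * (t - s))))
      rw [← h1]; ring
  rw [key]
  have step1 : (∫ x in (0:ℝ)..t, x ^ (γ - 1) * Real.exp (-(lam * x))) ≤
      Real.Gamma γ / lam ^ γ := by
    have hsub : (∫ x in (0:ℝ)..t, x ^ (γ - 1) * Real.exp (-(lam * x))) =
        lam⁻¹ • ∫ u in (0:ℝ)..(lam * t), (u / lam) ^ (γ - 1) * Real.exp (-u) := by
      have h2 := intervalIntegral.integral_comp_mul_left (a := (0:ℝ)) (b := t)
        (fun u : ℝ => (u / lam) ^ (γ - 1) * Real.exp (-u)) hlam.ne'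
      rw [mul_zero] at h2
      rw [← h2]
      congr 1
      funext x
      show x ^ (γ - 1) * Real.exp (-(lam * x)) =
        (lam * x / lam) ^ (γ - 1) * Real.exp (-(lam * x))
      rw [mul_comm lam x, mul_div_assoc, div_self hlam.ne', mul_one]
    rw [hsub]
    have hdiv : ∀ u ∈ Ioc (0:ℝ) (lam * t), (u / lam) ^ (γ - 1) * Real.exp (-u)
        = lam ^ (1 - γ) * (Real.exp (-u) * u ^ (γ - 1)) := by
      intro u hu
      rw [Real.div_rpow hu.1.le hlam.le]
      rw [div_eq_mul_inv, ← Real.rpow_neg hlam.le, neg_sub]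
      ring
    have hlamt : 0 ≤ lam * t := mul_nonneg hlam.le ht
    have hcong : (∫ u in (0:ℝ)..(lam * t), (u / lam) ^ (γ - 1) * Real.exp (-u))
        = lam ^ (1 - γ) * ∫ u in (0:ℝ)..(lam * t), Real.exp (-u) * u ^ (γ - 1) := by
      rw [← intervalIntegral.integral_const_mul]
      rw [intervalIntegral.integral_of_le hlamt, intervalIntegral.integral_of_le hlamt]
      refine setIntegral_congr_fun measurableSet_Ioc ?_
      intro u hu
      exact hdiv u hu
    rw [hcong]
    have hmono : (∫ u in (0:ℝ)..(lam * t), Real.exp (-u) * u ^ (γ - 1)) ≤ Real.Gamma γ := by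
      rw [Real.Gamma_eq_integral hγ0, intervalIntegral.integral_of_le hlamt]
      refine setIntegral_mono_set (Real.GammaIntegral_convergent hγ0) ?_ ?_
      · filter_upwards [ae_restrict_mem measurableSet_Ioi] with u hu
        exact mul_nonneg (Real.exp_pos _).le (Real.rpow_nonneg (le_of_lt hu) _)
      · exact HasSubset.Subset.eventuallyLE Ioc_subset_Ioi_self
    have hl1 : (0:ℝ) < lam ^ (1 - γ) := Real.rpow_pos_of_pos hlam _
    calc lam⁻¹ • (lam ^ (1 - γ) * ∫ u in (0:ℝ)..(lam * t), Real.exp (-u) * u ^ (γ - 1))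
        ≤ lam⁻¹ • (lam ^ (1 - γ) * Real.Gamma γ) := by
          apply smul_le_smul_of_nonneg_left _ (inv_nonneg.2 hlam.le)
          exact mul_le_mul_of_nonneg_left hmono hl1.le
      _ = Real.Gamma γ / lam ^ γ := by
          have h3 : lam⁻¹ * lam ^ (1 - γ) = lam ^ (-γ) := by
            rw [← Real.rpow_neg_one lam, ← Real.rpow_add hlam]
            congr 1; ring
          rw [smul_eq_mul, ← mul_assoc, h3, Real.rpow_neg hlam.le, div_eq_mul_inv, mul_comm]

  calc Real.exp (lam * t) * ∫ x in (0:ℝ)..t, x ^ (γ - 1) * Real.exp (-(lam * x))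
      ≤ Real.exp (lam * t) * (Real.Gamma γ / lam ^ γ) :=
        mul_le_mul_of_nonneg_left step1 (Real.exp_pos _).le


lemma contOn_aesm {T t : ℝ} (ht : t ∈ Icc (0:ℝ) T)
    {E : Type*} [NormedAddCommGroup E] {u : ℝ → E} (hu : ContinuousOn u (Icc 0 T)) :
    AEStronglyMeasurable u (volume.restrict (Ioc 0 t)) := by
  have hsub : Ioc (0:ℝ) t ⊆ Icc (0:ℝ) T := fun s hs => ⟨hs.1.le, hs.2.trans ht.2⟩
  exact (hu.aestronglyMeasurable measurableSet_Icc).mono_measure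
    (Measure.restrict_mono hsub le_rfl)

def gronLam (γ c : ℝ) : ℝ := max 1 ((2 * c * Real.Gamma γ) ^ (1/γ : ℝ))

def gronK (γ c T : ℝ) : ℝ := 2 * Real.exp (gronLam γ c * T)

lemma gronK_nonneg (γ c T : ℝ) : 0 ≤ gronK γ c T := by
  unfold gronK; positivity

lemma gronwall {γ T c g : ℝ} (hγ : γ ∈ Ioo (0:ℝ) 1) (hT : 0 < T) (hc : 0 ≤ c) (hg : 0 ≤ g)
    {u : ℝ → ℝ} (hu : ContinuousOn u (Icc 0 T)) (hu0 : ∀ t ∈ Icc (0:ℝ) T, 0 ≤ u t)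
    (hineq : ∀ t ∈ Icc (0:ℝ) T, u t ≤ g + c * ∫ s in (0:ℝ)..t, (t - s) ^ (γ - 1) * u s) :
    ∀ t ∈ Icc (0:ℝ) T, u t ≤ gronK γ c T * g := by
  obtain ⟨hγ0, hγ1⟩ := hγ
  set lam := gronLam γ c with hlamdef
  have hlam1 : (1:ℝ) ≤ lam := le_max_left _ _
  have hlam0 : (0:ℝ) < lam := lt_of_lt_of_le one_pos hlam1
  have hΓ : 0 < Real.Gamma γ := Real.Gamma_pos_of_pos hγ0
  have hkey : c * Real.Gamma γ / lam ^ γ ≤ 1 / 2 := by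
    have h2 : 2 * c * Real.Gamma γ ≤ lam ^ γ := by
      rcases le_total (2 * c * Real.Gamma γ) 1 with h | h
      · calc 2 * c * Real.Gamma γ ≤ 1 := h
          _ = (1:ℝ) ^ γ := (Real.one_rpow γ).symm
          _ ≤ lam ^ γ := Real.rpow_le_rpow zero_le_one hlam1 hγ0.le
      · have hx : (0:ℝ) ≤ 2 * c * Real.Gamma γ := by positivity
        calc 2 * c * Real.Gamma γ = ((2 * c * Real.Gamma γ) ^ (1/γ : ℝ)) ^ γ := by
              rw [one_div, Real.rpow_inv_rpow hx hγ0.ne']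
          _ ≤ lam ^ γ := Real.rpow_le_rpow (Real.rpow_nonneg hx _) (le_max_right _ _) hγ0.le
    have hpow : (0:ℝ) < lam ^ γ := Real.rpow_pos_of_pos hlam0 _
    rw [div_le_div_iff₀ hpow (by norm_num : (0:ℝ) < 2)]
    linarith
  have hv : ContinuousOn (fun t => Real.exp (-lam * t) * u t) (Icc 0 T) :=
    ((Real.continuous_exp.comp (continuous_const.mul continuous_id)).continuousOn).mul hu
  obtain ⟨t₀, ht₀, hmax⟩ := isCompact_Icc.exists_isMaxOn (nonempty_Icc.mpr hT.le) hv
  set W := Real.exp (-lam * t₀) * u t₀ with hWdef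
  have hW0 : 0 ≤ W := mul_nonneg (Real.exp_pos _).le (hu0 t₀ ht₀)
  have hub : ∀ s ∈ Icc (0:ℝ) T, u s ≤ Real.exp (lam * s) * W := by
    intro s hs
    have h1 : Real.exp (-lam * s) * u s ≤ W := hmax hs
    have h2 : lam * s + -lam * s = 0 := by ring
    calc u s = Real.exp (lam * s) * (Real.exp (-lam * s) * u s) := by
          rw [← mul_assoc, ← Real.exp_add, h2, Real.exp_zero, one_mul]
      _ ≤ Real.exp (lam * s) * W := mul_le_mul_of_nonneg_left h1 (Real.exp_pos _).le
  have hWle : W ≤ 2 * g := by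
    have h2 := hineq t₀ ht₀
    have hγ' : (-1:ℝ) < γ - 1 := by linarith
    have hIl : IntervalIntegrable (fun s => (t₀ - s) ^ (γ - 1) * u s) volume 0 t₀ := by
      have hb : ∀ s ∈ Ioc (0:ℝ) t₀, ‖u s‖ ≤ Real.exp (lam * T) * W := by
        intro s hs
        have hs' : s ∈ Icc (0:ℝ) T := ⟨hs.1.le, hs.2.trans ht₀.2⟩
        rw [Real.norm_eq_abs, abs_of_nonneg (hu0 s hs')]
        calc u s ≤ Real.exp (lam * s) * W := hub s hs'
          _ ≤ Real.exp (lam * T) * W := by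
              apply mul_le_mul_of_nonneg_right _ hW0
              exact Real.exp_le_exp.mpr (by nlinarith [hs'.2])
      have := ker_smul_ii (γ := γ) hγ' ht₀.1 (contOn_aesm ht₀ hu) hb
      simpa [smul_eq_mul] using this
    have hIr : IntervalIntegrable (fun s => (t₀ - s) ^ (γ - 1) * (Real.exp (lam * s) * W))
        volume 0 t₀ := by
      apply (ker_ii hγ' t₀).mul_continuousOn
      exact ((Real.continuous_exp.comp (continuous_const.mul continuous_id)).mul
        continuous_const).continuousOn
    have hint : ∫ s in (0:ℝ)..t₀, (t₀ - s) ^ (γ - 1) * u s ≤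
        W * (Real.exp (lam * t₀) * (Real.Gamma γ / lam ^ γ)) := by
      calc ∫ s in (0:ℝ)..t₀, (t₀ - s) ^ (γ - 1) * u s
          ≤ ∫ s in (0:ℝ)..t₀, (t₀ - s) ^ (γ - 1) * (Real.exp (lam * s) * W) := by
            apply intervalIntegral.integral_mono_on ht₀.1 hIl hIr
            intro s hs
            have hs' : s ∈ Icc (0:ℝ) T := ⟨hs.1, hs.2.trans ht₀.2⟩
            exact mul_le_mul_of_nonneg_left (hub s hs')
              (Real.rpow_nonneg (by linarith [hs.2]) _)
        _ = W * ∫ s in (0:ℝ)..t₀, (t₀ - s) ^ (γ - 1) * Real.exp (lam * s) := by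
            rw [← intervalIntegral.integral_const_mul]
            congr 1; funext s; ring
        _ ≤ W * (Real.exp (lam * t₀) * (Real.Gamma γ / lam ^ γ)) :=
            mul_le_mul_of_nonneg_left (exp_ker_integral_le ⟨hγ0, hγ1⟩ ht₀.1 hlam0) hW0
    have h3 : u t₀ ≤ g + c * (W * (Real.exp (lam * t₀) * (Real.Gamma γ / lam ^ γ))) :=
      h2.trans (add_le_add_right (mul_le_mul_of_nonneg_left hint hc) g)
    have hee : Real.exp (-lam * t₀) * Real.exp (lam * t₀) = 1 := by
      rw [← Real.exp_add]
      norm_num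
    have h4 : W ≤ Real.exp (-lam * t₀) * g + c * W * (Real.Gamma γ / lam ^ γ) := by
      rw [hWdef]
      calc Real.exp (-lam * t₀) * u t₀
          ≤ Real.exp (-lam * t₀) * (g + c * (W * (Real.exp (lam * t₀) * (Real.Gamma γ / lam ^ γ))))
            := mul_le_mul_of_nonneg_left h3 (Real.exp_pos _).le
        _ = Real.exp (-lam * t₀) * g +
              (Real.exp (-lam * t₀) * Real.exp (lam * t₀)) * (c * W * (Real.Gamma γ / lam ^ γ)) :=
            by ring
        _ = Real.exp (-lam * t₀) * g + c * W * (Real.Gamma γ / lam ^ γ) := by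
            rw [hee, one_mul]
    have h5 : Real.exp (-lam * t₀) * g ≤ g := by
      apply mul_le_of_le_one_left hg
      rw [Real.exp_le_one_iff]
      nlinarith [ht₀.1]
    have h6 : c * W * (Real.Gamma γ / lam ^ γ) ≤ W / 2 := by
      calc c * W * (Real.Gamma γ / lam ^ γ) = W * (c * Real.Gamma γ / lam ^ γ) := by ring
        _ ≤ W * (1 / 2) := mul_le_mul_of_nonneg_left hkey hW0
        _ = W / 2 := by ring
    linarith
  intro t ht
  calc u t ≤ Real.exp (lam * t) * W := hub t ht
    _ ≤ Real.exp (lam * T) * (2 * g) := by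
        apply mul_le_mul _ hWle hW0 (Real.exp_pos _).le
        exact Real.exp_le_exp.mpr (by nlinarith [ht.2])
    _ = gronK γ c T * g := by rw [gronK]; ring


variable {n : ℕ}

lemma mv_apply (A : Mat n) (x : Vec n) (i : Fin n) : mv A x i = ∑ j, A (i, j) * x j := rfl

lemma mv_add_left (A B : Mat n) (x : Vec n) : mv (A + B) x = mv A x + mv B x := by
  ext i
  simp only [mv_apply, PiLp.add_apply, add_mul]
  rw [Finset.sum_add_distrib]

lemma mv_add_right (A : Mat n) (x y : Vec n) : mv A (x + y) = mv A x + mv A y := by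
  ext i
  simp only [mv_apply, PiLp.add_apply, mul_add]
  rw [Finset.sum_add_distrib]

lemma mv_smul_left (c : ℝ) (A : Mat n) (x : Vec n) : mv (c • A) x = c • mv A x := by
  ext i
  simp only [mv_apply, PiLp.smul_apply, smul_eq_mul, Finset.mul_sum]
  congr 1; funext j; ring

lemma mv_smul_right (c : ℝ) (A : Mat n) (x : Vec n) : mv A (c • x) = c • mv A x := by
  ext i
  simp only [mv_apply, PiLp.smul_apply, smul_eq_mul, Finset.mul_sum]
  congr 1; funext j; ring

lemma mv_sub_right (A : Mat n) (x y : Vec n) : mv A (x - y) = mv A x - mv A y := by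
  ext i
  simp only [mv_apply, PiLp.sub_apply, mul_sub]
  rw [Finset.sum_sub_distrib]

lemma mv_norm_le (A : Mat n) (x : Vec n) : ‖mv A x‖ ≤ ‖A‖ * ‖x‖ := by
  rw [EuclideanSpace.norm_eq (mv A x)]
  have key : ∑ i, ‖mv A x i‖ ^ 2 ≤ (‖A‖ * ‖x‖) ^ 2 := by
    have h1 : ∀ i : Fin n, ‖mv A x i‖ ^ 2 ≤ (∑ j, A (i, j) ^ 2) * (∑ j, x j ^ 2) := by
      intro i
      rw [mv_apply, Real.norm_eq_abs, sq_abs]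
      exact Finset.sum_mul_sq_le_sq_mul_sq _ _ _
    calc ∑ i, ‖mv A x i‖ ^ 2 ≤ ∑ i, (∑ j, A (i, j) ^ 2) * (∑ j, x j ^ 2) :=
          Finset.sum_le_sum fun i _ => h1 i
      _ = (∑ p : Fin n × Fin n, A p ^ 2) * (∑ j, x j ^ 2) := by
          rw [← Finset.sum_mul, Fintype.sum_prod_type]
      _ = (‖A‖ * ‖x‖) ^ 2 := by
          rw [mul_pow, EuclideanSpace.norm_eq A, EuclideanSpace.norm_eq x,
            Real.sq_sqrt (by positivity), Real.sq_sqrt (by positivity)]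
          simp [Real.norm_eq_abs, sq_abs]
  calc Real.sqrt (∑ i, ‖mv A x i‖ ^ 2) ≤ Real.sqrt ((‖A‖ * ‖x‖) ^ 2) := Real.sqrt_le_sqrt key
    _ = ‖A‖ * ‖x‖ := Real.sqrt_sq (by positivity)

lemma mv_continuous : Continuous (fun p : Mat n × Vec n => mv p.1 p.2) := by
  apply Continuous.comp (PiLp.continuous_toLp (p := 2) (β := fun _ : Fin n => ℝ))
  apply continuous_pi
  intro i
  apply continuous_finset_sum
  intro j _
  exact ((EuclideanSpace.proj (i, j)).continuous.comp continuous_fst).mul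
    ((EuclideanSpace.proj j).continuous.comp continuous_snd)



lemma div_smul_eq {E : Type*} [NormedAddCommGroup E] [NormedSpace ℝ E]
    (x c : ℝ) (v : E) : (x / c) • v = x • (c⁻¹ • v) := by
  rw [smul_smul, div_eq_mul_inv]

lemma ker_norm_bound {γ T : ℝ} (hγ : γ ∈ Ioo (0:ℝ) 1) {t : ℝ} (ht : t ∈ Icc (0:ℝ) T)
    {E : Type*} [NormedAddCommGroup E] [NormedSpace ℝ E]
    {F : ℝ → E} (hF : AEStronglyMeasurable F (volume.restrict (Ioc 0 t)))
    {c b R : ℝ} (hc : 0 ≤ c) (hb : 0 ≤ b) (hR : 0 ≤ R)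
    {u r : ℝ → ℝ} (hu : ContinuousOn u (Icc 0 T)) (hu0 : ∀ s ∈ Icc (0:ℝ) T, 0 ≤ u s)
    (hrm : AEStronglyMeasurable r (volume.restrict (Ioc 0 t)))
    (hr0 : ∀ s ∈ Ioc (0:ℝ) t, 0 ≤ r s) (hrR : ∀ s ∈ Ioc (0:ℝ) t, r s ≤ R)
    (hFb : ∀ s ∈ Ioc (0:ℝ) t, ‖F s‖ ≤ c + b * u s + r s) :
    ‖∫ s in (0:ℝ)..t, (t - s) ^ (γ - 1) • F s‖ ≤
      c * (T ^ γ / γ) + b * (∫ s in (0:ℝ)..t, (t - s) ^ (γ - 1) * u s)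
        + ∫ s in (0:ℝ)..t, (t - s) ^ (γ - 1) * r s := by
  obtain ⟨hγ0, hγ1⟩ := hγ
  have hγ' : (-1:ℝ) < γ - 1 := by linarith
  obtain ⟨B, hB⟩ := isCompact_Icc.exists_bound_of_continuousOn hu
  have hIu : IntervalIntegrable (fun s => (t - s) ^ (γ - 1) * u s) volume 0 t := by
    have hub : ∀ s ∈ Ioc (0:ℝ) t, ‖u s‖ ≤ B := by
      intro s hs; exact hB s ⟨hs.1.le, hs.2.trans ht.2⟩
    simpa [smul_eq_mul] using ker_smul_ii hγ' ht.1 (contOn_aesm ht hu) hub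
  have hIr : IntervalIntegrable (fun s => (t - s) ^ (γ - 1) * r s) volume 0 t := by
    have hrb : ∀ s ∈ Ioc (0:ℝ) t, ‖r s‖ ≤ R := by
      intro s hs; rw [Real.norm_eq_abs, abs_of_nonneg (hr0 s hs)]; exact hrR s hs
    simpa [smul_eq_mul] using ker_smul_ii hγ' ht.1 hrm hrb
  have hIc : IntervalIntegrable (fun s => (t - s) ^ (γ - 1) * c) volume 0 t :=
    (ker_ii hγ' t).mul_const c
  have heq : (fun s => (t - s) ^ (γ - 1) * (c + b * u s + r s)) =
      (fun s => (t - s) ^ (γ - 1) * c +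
        (b * ((t - s) ^ (γ - 1) * u s) + (t - s) ^ (γ - 1) * r s)) := by
    funext s; ring
  have hG : IntervalIntegrable (fun s => (t - s) ^ (γ - 1) * (c + b * u s + r s)) volume 0 t := by
    rw [heq]; exact hIc.add ((hIu.const_mul b).add hIr)
  have key := norm_ker_integral_le hγ' ht.1 (F := F) hG hFb
  have hsplit : (∫ s in (0:ℝ)..t, (t - s) ^ (γ - 1) * (c + b * u s + r s)) =
      (∫ s in (0:ℝ)..t, (t - s) ^ (γ - 1) * c) +
      (b * (∫ s in (0:ℝ)..t, (t - s) ^ (γ - 1) * u s) +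
        ∫ s in (0:ℝ)..t, (t - s) ^ (γ - 1) * r s) := by
    rw [heq, intervalIntegral.integral_add hIc ((hIu.const_mul b).add hIr),
      intervalIntegral.integral_add (hIu.const_mul b) hIr,
      intervalIntegral.integral_const_mul]
  have hcbound : (∫ s in (0:ℝ)..t, (t - s) ^ (γ - 1) * c) ≤ c * (T ^ γ / γ) := by
    rw [intervalIntegral.integral_mul_const, ker_integral hγ0 ht.1, sub_zero, mul_comm]
    apply mul_le_mul_of_nonneg_left _ hc
    exact (div_le_div_iff_of_pos_right hγ0).mpr (Real.rpow_le_rpow ht.1 ht.2 hγ0.le)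
  linarith [key.trans_eq hsplit]

lemma split_est {γ T : ℝ} (hγ : γ ∈ Ioo (0:ℝ) 1) (hT : 0 < T) {t : ℝ} (ht : t ∈ Icc (0:ℝ) T)
    {r : ℝ → ℝ} (hrm : AEStronglyMeasurable r (volume.restrict (Ioc 0 T)))
    {R h : ℝ} (hh : 0 < h) (hR : 0 ≤ R)
    (hr0 : ∀ s ∈ Ioc (0:ℝ) T, 0 ≤ r s) (hrR : ∀ s ∈ Ioc (0:ℝ) T, r s ≤ R) :
    ∫ s in (0:ℝ)..t, (t - s) ^ (γ - 1) * r s ≤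
      h ^ (γ - 1) * (∫ s in Ioc (0:ℝ) T, r s) + R * (h ^ γ / γ) := by
  obtain ⟨hγ0, hγ1⟩ := hγ
  have hγ' : (-1:ℝ) < γ - 1 := by linarith
  have hrm' : AEStronglyMeasurable r (volume.restrict (Ioc 0 t)) :=
    hrm.mono_measure (Measure.restrict_mono (Ioc_subset_Ioc le_rfl ht.2) le_rfl)
  have hrb : ∀ s ∈ Ioc (0:ℝ) t, ‖r s‖ ≤ R := by
    intro s hs
    have hs' : s ∈ Ioc (0:ℝ) T := Ioc_subset_Ioc le_rfl ht.2 hs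
    rw [Real.norm_eq_abs, abs_of_nonneg (hr0 s hs')]; exact hrR s hs'
  have hIkr : IntervalIntegrable (fun s => (t - s) ^ (γ - 1) * r s) volume 0 t := by
    simpa [smul_eq_mul] using ker_smul_ii hγ' ht.1 hrm' hrb
  have hrIT : IntegrableOn r (Ioc 0 T) volume := by
    refine Integrable.mono' (g := fun _ => R) (integrableOn_const (C := R) ?_) hrm ?_
    · rw [Real.volume_Ioc]; exact ENNReal.ofReal_ne_top
    · filter_upwards [ae_restrict_mem measurableSet_Ioc] with s hs
      rw [Real.norm_eq_abs, abs_of_nonneg (hr0 s hs)]; exact hrR s hs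
  have hrT0 : 0 ≤ ∫ s in Ioc (0:ℝ) T, r s :=
    setIntegral_nonneg measurableSet_Ioc hr0
  have hkerR : ∀ m, 0 ≤ m → m ≤ t →
      (∫ s in m..t, (t - s) ^ (γ - 1) * r s) ≤ R * ((t - m) ^ γ / γ) := by
    intro m hm0 hmt
    have hI1 : IntervalIntegrable (fun s => (t - s) ^ (γ - 1) * r s) volume m t :=
      hIkr.mono_set (by rw [uIcc_of_le hmt, uIcc_of_le ht.1]; exact Icc_subset_Icc hm0 le_rfl)
    have hI2 : IntervalIntegrable (fun s => (t - s) ^ (γ - 1) * R) volume m t :=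
      ((ker_ii hγ' t).mono_set
        (by rw [uIcc_of_le hmt, uIcc_of_le ht.1]; exact Icc_subset_Icc hm0 le_rfl)).mul_const R
    calc (∫ s in m..t, (t - s) ^ (γ - 1) * r s)
        ≤ ∫ s in m..t, (t - s) ^ (γ - 1) * R := by
          rw [intervalIntegral.integral_of_le hmt, intervalIntegral.integral_of_le hmt]
          apply setIntegral_mono_on
            ((intervalIntegrable_iff_integrableOn_Ioc_of_le hmt).mp hI1)
            ((intervalIntegrable_iff_integrableOn_Ioc_of_le hmt).mp hI2)
            measurableSet_Ioc
          intro s hs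
          have hs' : s ∈ Ioc (0:ℝ) T := ⟨lt_of_le_of_lt hm0 hs.1, hs.2.trans ht.2⟩
          exact mul_le_mul_of_nonneg_left (hrR s hs')
            (Real.rpow_nonneg (by linarith [hs.2]) _)
      _ = R * ((t - m) ^ γ / γ) := by
          rw [intervalIntegral.integral_mul_const, ker_integral hγ0 hmt, mul_comm]
  rcases le_or_gt t h with hth | hth
  · -- t ≤ h : single piece
    have h1 := hkerR 0 le_rfl ht.1
    rw [sub_zero] at h1
    have h2 : t ^ γ ≤ h ^ γ := Real.rpow_le_rpow ht.1 hth hγ0.le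
    have h3 : R * (t ^ γ / γ) ≤ R * (h ^ γ / γ) := by
      apply mul_le_mul_of_nonneg_left _ hR
      exact (div_le_div_iff_of_pos_right hγ0).mpr h2
    nlinarith [mul_nonneg (Real.rpow_nonneg hh.le (γ - 1)) hrT0]
  · -- h < t : split at m = t - h
    set m := t - h with hm
    have hm0 : 0 ≤ m := by simp [hm]; linarith
    have hmt : m ≤ t := by simp [hm]; linarith
    have hIa : IntervalIntegrable (fun s => (t - s) ^ (γ - 1) * r s) volume 0 m :=
      hIkr.mono_set (by rw [uIcc_of_le hm0, uIcc_of_le ht.1]; exact Icc_subset_Icc le_rfl hmt)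
    have hIb : IntervalIntegrable (fun s => (t - s) ^ (γ - 1) * r s) volume m t :=
      hIkr.mono_set (by rw [uIcc_of_le hmt, uIcc_of_le ht.1]; exact Icc_subset_Icc hm0 le_rfl)
    have hsplit := intervalIntegral.integral_add_adjacent_intervals hIa hIb
    have hpiece2 : (∫ s in m..t, (t - s) ^ (γ - 1) * r s) ≤ R * (h ^ γ / γ) := by
      have := hkerR m hm0 hmt
      rw [show t - m = h by simp [hm]] at this
      exact this
    have hpiece1 : (∫ s in (0:ℝ)..m, (t - s) ^ (γ - 1) * r s) ≤
        h ^ (γ - 1) * ∫ s in Ioc (0:ℝ) T, r s := by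
      have hI3 : IntervalIntegrable (fun s => h ^ (γ - 1) * r s) volume 0 m := by
        have : IntegrableOn r (Ioc 0 m) volume :=
          hrIT.mono_set (Ioc_subset_Ioc le_rfl (hmt.trans ht.2))
        exact (intervalIntegrable_iff_integrableOn_Ioc_of_le hm0).mpr (this.const_mul _)
      calc (∫ s in (0:ℝ)..m, (t - s) ^ (γ - 1) * r s)
          ≤ ∫ s in (0:ℝ)..m, h ^ (γ - 1) * r s := by
            rw [intervalIntegral.integral_of_le hm0, intervalIntegral.integral_of_le hm0]
            apply setIntegral_mono_on
              ((intervalIntegrable_iff_integrableOn_Ioc_of_le hm0).mp hIa)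
              ((intervalIntegrable_iff_integrableOn_Ioc_of_le hm0).mp hI3)
              measurableSet_Ioc
            intro s hs
            have hs' : s ∈ Ioc (0:ℝ) T := ⟨hs.1, (hs.2.trans hmt).trans ht.2⟩
            apply mul_le_mul_of_nonneg_right _ (hr0 s hs')
            exact Real.rpow_le_rpow_of_nonpos hh (by simp [hm] at hs ⊢; linarith [hs.2])
              (by linarith)
        _ = h ^ (γ - 1) * ∫ s in (0:ℝ)..m, r s := intervalIntegral.integral_const_mul _ _
        _ ≤ h ^ (γ - 1) * ∫ s in Ioc (0:ℝ) T, r s := by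
            apply mul_le_mul_of_nonneg_left _ (Real.rpow_nonneg hh.le _)
            rw [intervalIntegral.integral_of_le hm0]
            apply setIntegral_mono_set hrIT
            · filter_upwards [ae_restrict_mem measurableSet_Ioc] with s hs using hr0 s hs
            · exact HasSubset.Subset.eventuallyLE (Ioc_subset_Ioc le_rfl (hmt.trans ht.2))
    linarith [hsplit]


set_option maxHeartbeats 1000000 in
lemma mv_comp_aesm {μ : Measure ℝ} {A : ℝ → Mat n} {x : ℝ → Vec n}
    (hA : AEStronglyMeasurable A μ) (hx : AEStronglyMeasurable x μ) :
    AEStronglyMeasurable (fun s => mv (A s) (x s)) μ :=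
  mv_continuous.comp_aestronglyMeasurable (hA.prodMk hx)

lemma lip_continuous {L : ℝ} (hL : 0 < L) {f : Vec n → Vec n}
    (hf : ∀ z₁ z₂ : Vec n, ‖f z₁ - f z₂‖ ≤ L * ‖z₁ - z₂‖) : Continuous f := by
  have h : LipschitzWith (Real.toNNReal L) f := by
    apply LipschitzWith.of_dist_le_mul
    intro x y
    rw [dist_eq_norm, dist_eq_norm, Real.coe_toNNReal _ hL.le]
    exact hf x y
  exact h.continuous

lemma f'_norm_le {L : ℝ} (hL : 0 < L) {f : Vec n → Vec n} {f' : Vec n → Vec n → Vec n}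
    (hf : ∀ z₁ z₂ : Vec n, ‖f z₁ - f z₂‖ ≤ L * ‖z₁ - z₂‖)
    (hf' : ∀ z d : Vec n,
      Tendsto (fun τ : ℝ => τ⁻¹ • (f (z + τ • d) - f z)) (𝓝[>] 0) (𝓝 (f' z d)))
    (z d : Vec n) : ‖f' z d‖ ≤ L * ‖d‖ := by
  refine le_of_tendsto (hf' z d).norm ?_
  filter_upwards [self_mem_nhdsWithin] with τ hτ
  have hτ0 : (0:ℝ) < τ := hτ
  rw [norm_smul, Real.norm_eq_abs, abs_of_pos (inv_pos.mpr hτ0)]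
  calc τ⁻¹ * ‖f (z + τ • d) - f z‖ ≤ τ⁻¹ * (L * ‖z + τ • d - z‖) :=
      mul_le_mul_of_nonneg_left (hf _ _) (inv_nonneg.mpr hτ0.le)
    _ = L * ‖d‖ := by
      rw [add_sub_cancel_left, norm_smul, Real.norm_eq_abs, abs_of_pos hτ0]
      field_simp

lemma f'_comp_aesm {f : Vec n → Vec n} {f' : Vec n → Vec n → Vec n}
    (hfc : Continuous f)
    (hf' : ∀ z d : Vec n,
      Tendsto (fun τ : ℝ => τ⁻¹ • (f (z + τ • d) - f z)) (𝓝[>] 0) (𝓝 (f' z d)))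
    {μ : Measure ℝ} {z d : ℝ → Vec n}
    (hz : AEStronglyMeasurable z μ) (hd : AEStronglyMeasurable d μ) :
    AEStronglyMeasurable (fun s => f' (z s) (d s)) μ := by
  have h1 : Tendsto (fun k : ℕ => ((k:ℝ) + 1)) atTop atTop :=
    tendsto_atTop_add_const_right _ 1 tendsto_natCast_atTop_atTop
  have hseq : Tendsto (fun k : ℕ => ((k:ℝ) + 1)⁻¹) atTop (𝓝[>] (0:ℝ)) := by
    apply tendsto_nhdsWithin_of_tendsto_nhds_of_eventually_within
    · exact h1.inv_tendsto_atTop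
    · filter_upwards with k
      exact mem_Ioi.mpr (by positivity)
  apply aestronglyMeasurable_of_tendsto_ae atTop
    (f := fun (k : ℕ) s => (((k:ℝ) + 1)⁻¹)⁻¹ • (f (z s + ((k:ℝ) + 1)⁻¹ • d s) - f (z s)))
  · intro k
    exact ((hfc.comp_aestronglyMeasurable (hz.add (hd.const_smul ((k:ℝ) + 1)⁻¹))).sub
      (hfc.comp_aestronglyMeasurable hz)).const_smul (((k:ℝ) + 1)⁻¹)⁻¹
  · filter_upwards with s
    exact (hf' (z s) (d s)).comp hseq

end S6
/-- The solution operator `S` is directionally differentiable: if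
`y = S(a,ℓ)`, `y^τ = S(a+τδa, ℓ+τδℓ)` for `τ > 0`, and `δy` solves the linearized
integral equation, then `‖(y^τ - y)/τ - δy‖_{C([0,T];ℝⁿ)} → 0` as `τ ↓ 0`
(stated as uniform convergence on `[0,T]`). -/
theorem stmt_6 {n : ℕ} (γ T L : ℝ) (hγ : γ ∈ Ioo (0:ℝ) 1) (hT : 0 < T) (hL : 0 < L)
    (y₀ : Vec n) (f : Vec n → Vec n) (f' : Vec n → Vec n → Vec n)
    (hf : ∀ z₁ z₂ : Vec n, ‖f z₁ - f z₂‖ ≤ L * ‖z₁ - z₂‖)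
    (hf' : ∀ z d : Vec n,
      Tendsto (fun τ : ℝ => τ⁻¹ • (f (z + τ • d) - f z)) (𝓝[>] 0) (𝓝 (f' z d)))
    (a δa : ℝ → Mat n) (ℓ δℓ : ℝ → Vec n)
    (ha : Measurable a) (hℓ : Measurable ℓ) (hδa : Measurable δa) (hδℓ : Measurable δℓ)
    (hbd : ∃ C : ℝ, ∀ t ∈ Icc (0:ℝ) T, ‖a t‖ ≤ C ∧ ‖ℓ t‖ ≤ C ∧ ‖δa t‖ ≤ C ∧ ‖δℓ t‖ ≤ C)
    (y : ℝ → Vec n) (hy : IsMildSolution γ T y₀ f a ℓ y)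
    (δy : ℝ → Vec n) (hδy : IsLinSolution γ T f' a ℓ y δa δℓ δy)
    (Y : ℝ → ℝ → Vec n)
    (hY : ∀ τ ∈ Ioi (0:ℝ),
      IsMildSolution γ T y₀ f (fun s => a s + τ • δa s) (fun s => ℓ s + τ • δℓ s) (Y τ)) :
    ∀ ε > (0:ℝ), ∃ τ₀ > (0:ℝ), ∀ τ ∈ Ioo (0:ℝ) τ₀, ∀ t ∈ Icc (0:ℝ) T,
      ‖τ⁻¹ • (Y τ t - y t) - δy t‖ ≤ ε := by
  intro ε hε
  have hγ0 : 0 < γ := hγ.1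
  have hγ1 : γ < 1 := hγ.2
  have hγ' : (-1:ℝ) < γ - 1 := by linarith
  have hΓ : 0 < Real.Gamma γ := Real.Gamma_pos_of_pos hγ0
  have hΓi : (0:ℝ) ≤ (Real.Gamma γ)⁻¹ := inv_nonneg.mpr hΓ.le
  obtain ⟨hyc, hyeq⟩ := hy
  obtain ⟨hδyc, hδyeq⟩ := hδy
  obtain ⟨C₀, hC₀⟩ := hbd
  set C : ℝ := max C₀ 1 with hCdef
  have hC1 : (1:ℝ) ≤ C := le_max_right _ _
  have hC0 : (0:ℝ) < C := lt_of_lt_of_le one_pos hC1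
  have hCa : ∀ s ∈ Icc (0:ℝ) T, ‖a s‖ ≤ C := fun s hs => ((hC₀ s hs).1).trans (le_max_left _ _)
  have hCl : ∀ s ∈ Icc (0:ℝ) T, ‖ℓ s‖ ≤ C := fun s hs => ((hC₀ s hs).2.1).trans (le_max_left _ _)
  have hCda : ∀ s ∈ Icc (0:ℝ) T, ‖δa s‖ ≤ C :=
    fun s hs => ((hC₀ s hs).2.2.1).trans (le_max_left _ _)
  have hCdl : ∀ s ∈ Icc (0:ℝ) T, ‖δℓ s‖ ≤ C :=
    fun s hs => ((hC₀ s hs).2.2.2).trans (le_max_left _ _)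
  have hfc : Continuous f := S6.lip_continuous hL hf
  have hfub : ∀ w : Vec n, ‖f w‖ ≤ ‖f 0‖ + L * ‖w‖ := by
    intro w
    have h1 := hf w 0
    rw [sub_zero] at h1
    calc ‖f w‖ = ‖f w - f 0 + f 0‖ := by rw [sub_add_cancel]
      _ ≤ ‖f w - f 0‖ + ‖f 0‖ := norm_add_le _ _
      _ ≤ L * ‖w‖ + ‖f 0‖ := add_le_add_left h1 _
      _ = ‖f 0‖ + L * ‖w‖ := by ring
  -- bounds on y and δy
  obtain ⟨My₀, hMy₀⟩ := isCompact_Icc.exists_bound_of_continuousOn hyc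
  set My : ℝ := max My₀ 0 with hMydef
  have hMy0 : (0:ℝ) ≤ My := le_max_right _ _
  have hMy : ∀ s ∈ Icc (0:ℝ) T, ‖y s‖ ≤ My := fun s hs => (hMy₀ s hs).trans (le_max_left _ _)
  obtain ⟨Mδy₀, hMδy₀⟩ := isCompact_Icc.exists_bound_of_continuousOn hδyc
  set Mδy : ℝ := max Mδy₀ 0 with hMδydef
  have hMδy0 : (0:ℝ) ≤ Mδy := le_max_right _ _
  have hMδy : ∀ s ∈ Icc (0:ℝ) T, ‖δy s‖ ≤ Mδy :=
    fun s hs => (hMδy₀ s hs).trans (le_max_left _ _)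
  -- abbreviations
  set z : ℝ → Vec n := fun s => mv (a s) (y s) + ℓ s with hzdef
  set d : ℝ → Vec n := fun s => mv (a s) (δy s) + mv (δa s) (y s) + δℓ s with hddef
  set Md : ℝ := C * Mδy + C * My + C with hMddef
  have hMd0 : (0:ℝ) ≤ Md := by positivity
  have hdb : ∀ s ∈ Icc (0:ℝ) T, ‖d s‖ ≤ Md := by
    intro s hs
    calc ‖d s‖ ≤ ‖mv (a s) (δy s) + mv (δa s) (y s)‖ + ‖δℓ s‖ := norm_add_le _ _
      _ ≤ (‖mv (a s) (δy s)‖ + ‖mv (δa s) (y s)‖) + ‖δℓ s‖ :=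
          add_le_add_left (norm_add_le _ _) _
      _ ≤ (‖a s‖ * ‖δy s‖ + ‖δa s‖ * ‖y s‖) + ‖δℓ s‖ :=
          add_le_add_left (add_le_add (S6.mv_norm_le _ _) (S6.mv_norm_le _ _)) _
      _ ≤ (C * Mδy + C * My) + C := by
          have h1 := mul_le_mul (hCa s hs) (hMδy s hs) (norm_nonneg _) hC0.le
          have h2 := mul_le_mul (hCda s hs) (hMy s hs) (norm_nonneg _) hC0.le
          exact add_le_add (add_le_add h1 h2) (hCdl s hs)
      _ = Md := by rw [hMddef]
  -- measurability on [0,T]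
  have hTmem : T ∈ Icc (0:ℝ) T := ⟨hT.le, le_rfl⟩
  have hyT : AEStronglyMeasurable y (volume.restrict (Ioc 0 T)) := S6.contOn_aesm hTmem hyc
  have hδyT : AEStronglyMeasurable δy (volume.restrict (Ioc 0 T)) := S6.contOn_aesm hTmem hδyc
  have hzT : AEStronglyMeasurable z (volume.restrict (Ioc 0 T)) :=
    (S6.mv_comp_aesm ha.aestronglyMeasurable hyT).add hℓ.aestronglyMeasurable
  have hdT : AEStronglyMeasurable d (volume.restrict (Ioc 0 T)) :=
    ((S6.mv_comp_aesm ha.aestronglyMeasurable hδyT).add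
      (S6.mv_comp_aesm hδa.aestronglyMeasurable hyT)).add hδℓ.aestronglyMeasurable
  have hres : ∀ {t : ℝ}, t ∈ Icc (0:ℝ) T →
      volume.restrict (Ioc (0:ℝ) t) ≤ volume.restrict (Ioc (0:ℝ) T) :=
    fun ht => Measure.restrict_mono (Ioc_subset_Ioc le_rfl ht.2) le_rfl
  -- Step 1 : uniform bound on Y τ
  have step1 : ∃ M₁ : ℝ, 0 ≤ M₁ ∧ ∀ τ ∈ Ioc (0:ℝ) 1, ∀ t ∈ Icc (0:ℝ) T, ‖Y τ t‖ ≤ M₁ := by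
    set c₁ : ℝ := (Real.Gamma γ)⁻¹ * (2 * L * C) with hc₁def
    have hc₁0 : 0 ≤ c₁ := by positivity
    set g₁ : ℝ := ‖y₀‖ + (Real.Gamma γ)⁻¹ * (‖f 0‖ + 2 * L * C) * (T ^ γ / γ) with hg₁def
    have hg₁0 : 0 ≤ g₁ := by positivity
    refine ⟨S6.gronK γ c₁ T * g₁, mul_nonneg (S6.gronK_nonneg _ _ _) hg₁0, ?_⟩
    intro τ hτ
    obtain ⟨hYc, hYeq⟩ := hY τ hτ.1
    apply S6.gronwall ⟨hγ0, hγ1⟩ hT hc₁0 hg₁0 hYc.norm (fun t _ => norm_nonneg _)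
    intro t ht
    rw [hYeq t ht]
    refine (norm_add_le _ _).trans ?_
    have hbnd : ‖∫ s in (0:ℝ)..t, ((t - s) ^ (γ - 1) / Real.Gamma γ) •
        f (mv (a s + τ • δa s) (Y τ s) + (ℓ s + τ • δℓ s))‖ ≤
        (Real.Gamma γ)⁻¹ * (‖f 0‖ + 2 * L * C) * (T ^ γ / γ) +
          c₁ * (∫ s in (0:ℝ)..t, (t - s) ^ (γ - 1) * ‖Y τ s‖)
            + ∫ s in (0:ℝ)..t, (t - s) ^ (γ - 1) * (0:ℝ) := by
      simp only [S6.div_smul_eq]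
      have hFm : AEStronglyMeasurable (fun s => (Real.Gamma γ)⁻¹ •
          f (mv (a s + τ • δa s) (Y τ s) + (ℓ s + τ • δℓ s)))
          (volume.restrict (Ioc 0 t)) :=
        (hfc.comp_aestronglyMeasurable ((S6.mv_comp_aesm
          (ha.aestronglyMeasurable.add (hδa.aestronglyMeasurable.const_smul τ))
          (S6.contOn_aesm ht hYc)).add
          (hℓ.aestronglyMeasurable.add (hδℓ.aestronglyMeasurable.const_smul τ)))).const_smul (Real.Gamma γ)⁻¹
      apply S6.ker_norm_bound ⟨hγ0, hγ1⟩ ht hFm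
        (by positivity) hc₁0 le_rfl hYc.norm (fun s _ => norm_nonneg _)
        aestronglyMeasurable_const (fun s _ => le_rfl) (fun s _ => le_rfl)
      · intro s hs
        have hs' : s ∈ Icc (0:ℝ) T := ⟨hs.1.le, hs.2.trans ht.2⟩
        set w := mv (a s + τ • δa s) (Y τ s) + (ℓ s + τ • δℓ s) with hwdef
        have hw : ‖w‖ ≤ 2 * C * ‖Y τ s‖ + 2 * C := by
          have hA : ‖a s + τ • δa s‖ ≤ C + C := by
            refine (norm_add_le _ _).trans (add_le_add (hCa s hs') ?_)
            rw [norm_smul, Real.norm_eq_abs, abs_of_pos hτ.1]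
            calc τ * ‖δa s‖ ≤ 1 * C :=
                mul_le_mul hτ.2 (hCda s hs') (norm_nonneg _) zero_le_one
              _ = C := one_mul C
          have hLl : ‖ℓ s + τ • δℓ s‖ ≤ C + C := by
            refine (norm_add_le _ _).trans (add_le_add (hCl s hs') ?_)
            rw [norm_smul, Real.norm_eq_abs, abs_of_pos hτ.1]
            calc τ * ‖δℓ s‖ ≤ 1 * C :=
                mul_le_mul hτ.2 (hCdl s hs') (norm_nonneg _) zero_le_one
              _ = C := one_mul C
          calc ‖w‖ ≤ ‖mv (a s + τ • δa s) (Y τ s)‖ + ‖ℓ s + τ • δℓ s‖ := norm_add_le _ _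
            _ ≤ ‖a s + τ • δa s‖ * ‖Y τ s‖ + (C + C) :=
                add_le_add (S6.mv_norm_le _ _) hLl
            _ ≤ (C + C) * ‖Y τ s‖ + (C + C) := by
                have := mul_le_mul_of_nonneg_right hA (norm_nonneg (Y τ s))
                linarith
            _ = 2 * C * ‖Y τ s‖ + 2 * C := by ring
        have hfw : ‖f w‖ ≤ ‖f 0‖ + 2 * L * C + 2 * L * C * ‖Y τ s‖ := by
          have h2 := hfub w
          have h3 : L * ‖w‖ ≤ L * (2 * C * ‖Y τ s‖ + 2 * C) :=
            mul_le_mul_of_nonneg_left hw hL.le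
          nlinarith
        calc ‖(Real.Gamma γ)⁻¹ • f w‖ = (Real.Gamma γ)⁻¹ * ‖f w‖ := by
              rw [norm_smul, Real.norm_eq_abs, abs_of_nonneg hΓi]
          _ ≤ (Real.Gamma γ)⁻¹ * (‖f 0‖ + 2 * L * C + 2 * L * C * ‖Y τ s‖) :=
              mul_le_mul_of_nonneg_left hfw hΓi
          _ = (Real.Gamma γ)⁻¹ * (‖f 0‖ + 2 * L * C) + c₁ * ‖Y τ s‖ + 0 := by
              rw [hc₁def]; ring
    have hz0 : (∫ s in (0:ℝ)..t, (t - s) ^ (γ - 1) * (0:ℝ)) = 0 := by simp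
    rw [hz0, add_zero] at hbnd
    have := add_le_add_left hbnd ‖y₀‖
    rw [hg₁def]
    linarith
  obtain ⟨M₁, hM₁0, hstep1⟩ := step1
  -- global bounds on z and the perturbed argument
  have hzb : ∀ s ∈ Icc (0:ℝ) T, ‖z s‖ ≤ C * My + C := by
    intro s hs
    calc ‖z s‖ ≤ ‖mv (a s) (y s)‖ + ‖ℓ s‖ := norm_add_le _ _
      _ ≤ ‖a s‖ * ‖y s‖ + C := add_le_add (S6.mv_norm_le _ _) (hCl s hs)
      _ ≤ C * My + C := add_le_add_left
          (mul_le_mul (hCa s hs) (hMy s hs) (norm_nonneg _) hC0.le) _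
  have hzτb : ∀ τ ∈ Ioc (0:ℝ) 1, ∀ s ∈ Icc (0:ℝ) T,
      ‖mv (a s + τ • δa s) (Y τ s) + (ℓ s + τ • δℓ s)‖ ≤ 2 * C * ‖Y τ s‖ + 2 * C := by
    intro τ hτ s hs'
    have hA : ‖a s + τ • δa s‖ ≤ C + C := by
      refine (norm_add_le _ _).trans (add_le_add (hCa s hs') ?_)
      rw [norm_smul, Real.norm_eq_abs, abs_of_pos hτ.1]
      calc τ * ‖δa s‖ ≤ 1 * C := mul_le_mul hτ.2 (hCda s hs') (norm_nonneg _) zero_le_one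
        _ = C := one_mul C
    have hLl : ‖ℓ s + τ • δℓ s‖ ≤ C + C := by
      refine (norm_add_le _ _).trans (add_le_add (hCl s hs') ?_)
      rw [norm_smul, Real.norm_eq_abs, abs_of_pos hτ.1]
      calc τ * ‖δℓ s‖ ≤ 1 * C := mul_le_mul hτ.2 (hCdl s hs') (norm_nonneg _) zero_le_one
        _ = C := one_mul C
    calc ‖mv (a s + τ • δa s) (Y τ s) + (ℓ s + τ • δℓ s)‖
        ≤ ‖mv (a s + τ • δa s) (Y τ s)‖ + ‖ℓ s + τ • δℓ s‖ := norm_add_le _ _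
      _ ≤ ‖a s + τ • δa s‖ * ‖Y τ s‖ + (C + C) := add_le_add (S6.mv_norm_le _ _) hLl
      _ ≤ (C + C) * ‖Y τ s‖ + (C + C) := by
          have := mul_le_mul_of_nonneg_right hA (norm_nonneg (Y τ s))
          linarith
      _ = 2 * C * ‖Y τ s‖ + 2 * C := by ring
  -- Step 2 : Lipschitz estimate in τ
  have step2 : ∃ M₂ : ℝ, 0 ≤ M₂ ∧ ∀ τ ∈ Ioc (0:ℝ) 1, ∀ t ∈ Icc (0:ℝ) T,
      ‖Y τ t - y t‖ ≤ M₂ * τ := by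
    set b₂ : ℝ := (Real.Gamma γ)⁻¹ * (L * C) with hb₂def
    have hb₂0 : 0 ≤ b₂ := by positivity
    set g₂ : ℝ := (Real.Gamma γ)⁻¹ * (L * (C * M₁ + C)) * (T ^ γ / γ) with hg₂def
    have hg₂0 : 0 ≤ g₂ := by positivity
    refine ⟨S6.gronK γ b₂ T * g₂, mul_nonneg (S6.gronK_nonneg _ _ _) hg₂0, ?_⟩
    intro τ hτ
    obtain ⟨hYc, hYeq⟩ := hY τ hτ.1
    have main : ∀ t ∈ Icc (0:ℝ) T, ‖Y τ t - y t‖ ≤ (τ * g₂) +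
        b₂ * ∫ s in (0:ℝ)..t, (t - s) ^ (γ - 1) * ‖Y τ s - y s‖ := by
      intro t ht
      have hFm1 : AEStronglyMeasurable (fun s => (Real.Gamma γ)⁻¹ •
          f (mv (a s + τ • δa s) (Y τ s) + (ℓ s + τ • δℓ s)))
          (volume.restrict (Ioc 0 t)) :=
        (hfc.comp_aestronglyMeasurable ((S6.mv_comp_aesm
          (ha.aestronglyMeasurable.add (hδa.aestronglyMeasurable.const_smul τ))
          (S6.contOn_aesm ht hYc)).add
          (hℓ.aestronglyMeasurable.add (hδℓ.aestronglyMeasurable.const_smul τ)))).const_smul (Real.Gamma γ)⁻¹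
      have hFm2 : AEStronglyMeasurable (fun s => (Real.Gamma γ)⁻¹ • f (z s))
          (volume.restrict (Ioc 0 t)) :=
        (hfc.comp_aestronglyMeasurable (hzT.mono_measure (hres ht))).const_smul (Real.Gamma γ)⁻¹
      have hI1 : IntervalIntegrable (fun s => (t - s) ^ (γ - 1) •
          ((Real.Gamma γ)⁻¹ • f (mv (a s + τ • δa s) (Y τ s) + (ℓ s + τ • δℓ s))))
          volume 0 t := by
        apply S6.ker_smul_ii hγ' ht.1 hFm1
          (M := (Real.Gamma γ)⁻¹ * (‖f 0‖ + L * (2 * C * M₁ + 2 * C)))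
        intro s hs
        have hs' : s ∈ Icc (0:ℝ) T := ⟨hs.1.le, hs.2.trans ht.2⟩
        rw [norm_smul, Real.norm_eq_abs, abs_of_nonneg hΓi]
        apply mul_le_mul_of_nonneg_left _ hΓi
        refine (hfub _).trans ?_
        have h1 := (hzτb τ hτ s hs').trans
          (by nlinarith [hstep1 τ hτ s hs', hC0.le] :
            2 * C * ‖Y τ s‖ + 2 * C ≤ 2 * C * M₁ + 2 * C)
        nlinarith [hL.le]
      have hI2 : IntervalIntegrable (fun s => (t - s) ^ (γ - 1) •
          ((Real.Gamma γ)⁻¹ • f (z s))) volume 0 t := by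
        apply S6.ker_smul_ii hγ' ht.1 hFm2
          (M := (Real.Gamma γ)⁻¹ * (‖f 0‖ + L * (C * My + C)))
        intro s hs
        have hs' : s ∈ Icc (0:ℝ) T := ⟨hs.1.le, hs.2.trans ht.2⟩
        rw [norm_smul, Real.norm_eq_abs, abs_of_nonneg hΓi]
        apply mul_le_mul_of_nonneg_left _ hΓi
        refine (hfub _).trans ?_
        have h1 := hzb s hs'
        nlinarith [hL.le]
      have hdiff : Y τ t - y t = ∫ s in (0:ℝ)..t, (t - s) ^ (γ - 1) •
          ((Real.Gamma γ)⁻¹ •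
            (f (mv (a s + τ • δa s) (Y τ s) + (ℓ s + τ • δℓ s)) - f (z s))) := by
        rw [hYeq t ht, hyeq t ht, add_sub_add_left_eq_sub]
        simp only [S6.div_smul_eq]
        rw [eq_comm]
        calc (∫ s in (0:ℝ)..t, (t - s) ^ (γ - 1) • ((Real.Gamma γ)⁻¹ •
              (f (mv (a s + τ • δa s) (Y τ s) + (ℓ s + τ • δℓ s)) - f (z s))))
            = ∫ s in (0:ℝ)..t,
              ((t - s) ^ (γ - 1) • ((Real.Gamma γ)⁻¹ •
                f (mv (a s + τ • δa s) (Y τ s) + (ℓ s + τ • δℓ s))) -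
               (t - s) ^ (γ - 1) • ((Real.Gamma γ)⁻¹ • f (z s))) := by
              congr 1
              funext s
              rw [← smul_sub, ← smul_sub]
          _ = _ := intervalIntegral.integral_sub hI1 hI2
      rw [hdiff]
      have hbnd : ‖∫ s in (0:ℝ)..t, (t - s) ^ (γ - 1) •
          ((Real.Gamma γ)⁻¹ •
            (f (mv (a s + τ • δa s) (Y τ s) + (ℓ s + τ • δℓ s)) - f (z s)))‖ ≤
          (τ * ((Real.Gamma γ)⁻¹ * (L * (C * M₁ + C)))) * (T ^ γ / γ) +
            b₂ * (∫ s in (0:ℝ)..t, (t - s) ^ (γ - 1) * ‖Y τ s - y s‖)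
              + ∫ s in (0:ℝ)..t, (t - s) ^ (γ - 1) * (0:ℝ) := by
        apply S6.ker_norm_bound ⟨hγ0, hγ1⟩ ht (hFm1.sub hFm2 |>.congr ?meq)
          (mul_nonneg hτ.1.le (by positivity)) hb₂0 le_rfl ((hYc.sub hyc).norm)
          (fun s _ => norm_nonneg _)
          aestronglyMeasurable_const (fun s _ => le_rfl) (fun s _ => le_rfl)
        case meq =>
          filter_upwards with s
          simp only [Pi.sub_apply]
          rw [smul_sub]
        · intro s hs
          have hs' : s ∈ Icc (0:ℝ) T := ⟨hs.1.le, hs.2.trans ht.2⟩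
          have hid : mv (a s + τ • δa s) (Y τ s) + (ℓ s + τ • δℓ s) - z s
              = mv (a s) (Y τ s - y s) + τ • (mv (δa s) (Y τ s) + δℓ s) := by
            simp only [hzdef]
            rw [S6.mv_add_left, S6.mv_smul_left, S6.mv_sub_right, smul_add]
            abel
          have hzdn : ‖mv (a s + τ • δa s) (Y τ s) + (ℓ s + τ • δℓ s) - z s‖ ≤
              C * ‖Y τ s - y s‖ + τ * (C * M₁ + C) := by
            rw [hid]
            calc ‖mv (a s) (Y τ s - y s) + τ • (mv (δa s) (Y τ s) + δℓ s)‖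
                ≤ ‖mv (a s) (Y τ s - y s)‖ + ‖τ • (mv (δa s) (Y τ s) + δℓ s)‖ :=
                  norm_add_le _ _
              _ ≤ C * ‖Y τ s - y s‖ + τ * (C * M₁ + C) := by
                  refine add_le_add ((S6.mv_norm_le _ _).trans
                    (mul_le_mul_of_nonneg_right (hCa s hs') (norm_nonneg _))) ?_
                  rw [norm_smul, Real.norm_eq_abs, abs_of_pos hτ.1]
                  apply mul_le_mul_of_nonneg_left _ hτ.1.le
                  calc ‖mv (δa s) (Y τ s) + δℓ s‖
                      ≤ ‖δa s‖ * ‖Y τ s‖ + ‖δℓ s‖ :=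
                        (norm_add_le _ _).trans (add_le_add_left (S6.mv_norm_le _ _) _)
                    _ ≤ C * M₁ + C := add_le_add
                        (mul_le_mul (hCda s hs') (hstep1 τ hτ s hs') (norm_nonneg _) hC0.le)
                        (hCdl s hs')
          calc ‖(Real.Gamma γ)⁻¹ •
              (f (mv (a s + τ • δa s) (Y τ s) + (ℓ s + τ • δℓ s)) - f (z s))‖
              = (Real.Gamma γ)⁻¹ *
                ‖f (mv (a s + τ • δa s) (Y τ s) + (ℓ s + τ • δℓ s)) - f (z s)‖ := by
                rw [norm_smul, Real.norm_eq_abs, abs_of_nonneg hΓi]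
            _ ≤ (Real.Gamma γ)⁻¹ *
                (L * ‖mv (a s + τ • δa s) (Y τ s) + (ℓ s + τ • δℓ s) - z s‖) :=
                mul_le_mul_of_nonneg_left (hf _ _) hΓi
            _ ≤ (Real.Gamma γ)⁻¹ * (L * (C * ‖Y τ s - y s‖ + τ * (C * M₁ + C))) := by
                apply mul_le_mul_of_nonneg_left _ hΓi
                exact mul_le_mul_of_nonneg_left hzdn hL.le
            _ = τ * ((Real.Gamma γ)⁻¹ * (L * (C * M₁ + C))) + b₂ * ‖Y τ s - y s‖ + 0 := by
                rw [hb₂def]; ring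
      have hz0 : (∫ s in (0:ℝ)..t, (t - s) ^ (γ - 1) * (0:ℝ)) = 0 := by simp
      rw [hz0, add_zero] at hbnd
      have heq2 : (τ * ((Real.Gamma γ)⁻¹ * (L * (C * M₁ + C)))) * (T ^ γ / γ) = τ * g₂ := by
        rw [hg₂def]; ring
      rw [heq2] at hbnd
      exact hbnd
    have hg : 0 ≤ τ * g₂ := mul_nonneg hτ.1.le hg₂0
    have hconc := S6.gronwall ⟨hγ0, hγ1⟩ hT hb₂0 hg ((hYc.sub hyc).norm)
      (fun t _ => norm_nonneg _) main
    intro t ht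
    calc ‖Y τ t - y t‖ ≤ S6.gronK γ b₂ T * (τ * g₂) := hconc t ht
      _ = S6.gronK γ b₂ T * g₂ * τ := by ring
  obtain ⟨M₂, hM₂0, hstep2⟩ := step2
  -- the remainder function
  set q : ℝ → ℝ → ℝ :=
    fun τ s => ‖τ⁻¹ • (f (z s + τ • d s) - f (z s)) - f' (z s) (d s)‖ with hqdef
  have hf'T : AEStronglyMeasurable (fun s => f' (z s) (d s)) (volume.restrict (Ioc 0 T)) :=
    S6.f'_comp_aesm hfc hf' hzT hdT
  have hq_aesm : ∀ τ : ℝ, AEStronglyMeasurable (q τ) (volume.restrict (Ioc 0 T)) := by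
    intro τ
    simp only [hqdef]
    apply AEStronglyMeasurable.norm
    exact ((((hfc.comp_aestronglyMeasurable (hzT.add (hdT.const_smul τ))).sub
      (hfc.comp_aestronglyMeasurable hzT)).const_smul τ⁻¹).sub hf'T)
  have hq0 : ∀ τ s, 0 ≤ q τ s := fun τ s => norm_nonneg _
  have hqR : ∀ τ ∈ Ioi (0:ℝ), ∀ s ∈ Icc (0:ℝ) T, q τ s ≤ 2 * L * Md := by
    intro τ hτ s hs
    have hτ0 : (0:ℝ) < τ := hτ
    have h1 : ‖τ⁻¹ • (f (z s + τ • d s) - f (z s))‖ ≤ L * ‖d s‖ := by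
      rw [norm_smul, Real.norm_eq_abs, abs_of_pos (inv_pos.mpr hτ0)]
      calc τ⁻¹ * ‖f (z s + τ • d s) - f (z s)‖ ≤ τ⁻¹ * (L * ‖z s + τ • d s - z s‖) :=
          mul_le_mul_of_nonneg_left (hf _ _) (inv_nonneg.mpr hτ0.le)
        _ = L * ‖d s‖ := by
          rw [add_sub_cancel_left, norm_smul, Real.norm_eq_abs, abs_of_pos hτ0]
          field_simp
    have h2 : ‖f' (z s) (d s)‖ ≤ L * ‖d s‖ := S6.f'_norm_le hL hf hf' _ _
    have h3 : ‖d s‖ ≤ Md := hdb s hs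
    calc q τ s ≤ ‖τ⁻¹ • (f (z s + τ • d s) - f (z s))‖ + ‖f' (z s) (d s)‖ := norm_sub_le _ _
      _ ≤ L * Md + L * Md := add_le_add (h1.trans (mul_le_mul_of_nonneg_left h3 hL.le))
          (h2.trans (mul_le_mul_of_nonneg_left h3 hL.le))
      _ = 2 * L * Md := by ring
  have hIconv : Tendsto (fun τ => ∫ s in Ioc (0:ℝ) T, q τ s) (𝓝[>] (0:ℝ)) (𝓝 0) := by
    have hDC : Tendsto (fun τ => ∫ s in Ioc (0:ℝ) T, q τ s) (𝓝[>] (0:ℝ))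
        (𝓝 (∫ s in Ioc (0:ℝ) T, (0:ℝ))) := by
      apply tendsto_integral_filter_of_dominated_convergence (fun _ => 2 * L * Md)
      · exact Eventually.of_forall hq_aesm
      · filter_upwards [self_mem_nhdsWithin] with τ hτ
        filter_upwards [ae_restrict_mem measurableSet_Ioc] with s hs
        rw [Real.norm_eq_abs, abs_of_nonneg (hq0 τ s)]
        exact hqR τ hτ s ⟨hs.1.le, hs.2⟩
      · refine integrableOn_const (C := 2 * L * Md) ?_
        rw [Real.volume_Ioc]; exact ENNReal.ofReal_ne_top
      · filter_upwards with s
        simp only [hqdef]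
        have hlim := ((hf' (z s) (d s)).sub
          (tendsto_const_nhds (x := f' (z s) (d s)))).norm
        simpa using hlim
    simpa using hDC
  -- Step 3 : the key Gronwall estimate for the difference quotient error
  set b₃ : ℝ := (Real.Gamma γ)⁻¹ * (L * C) with hb₃def
  have hb₃0 : 0 ≤ b₃ := by positivity
  set K₃ : ℝ := S6.gronK γ b₃ T with hK₃def
  have hK₃0 : 0 ≤ K₃ := S6.gronK_nonneg _ _ _
  set A₃ : ℝ := (Real.Gamma γ)⁻¹ * (L * (C * M₂)) * (T ^ γ / γ) with hA₃def
  have hA₃0 : 0 ≤ A₃ := by positivity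
  set B₃ : ℝ := (Real.Gamma γ)⁻¹ * (2 * L * Md) with hB₃def
  have hB₃0 : 0 ≤ B₃ := by positivity
  have key : ∀ τ ∈ Ioc (0:ℝ) 1, ∀ h : ℝ, 0 < h → ∀ t ∈ Icc (0:ℝ) T,
      ‖τ⁻¹ • (Y τ t - y t) - δy t‖ ≤
        K₃ * (A₃ * τ + (h ^ (γ - 1) * ((Real.Gamma γ)⁻¹ * ∫ s in Ioc (0:ℝ) T, q τ s)
          + B₃ * (h ^ γ / γ))) := by
    intro τ hτ h hh
    obtain ⟨hYc, hYeq⟩ := hY τ hτ.1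
    have hτ0 : (0:ℝ) < τ := hτ.1
    have hIq0 : 0 ≤ ∫ s in Ioc (0:ℝ) T, q τ s :=
      setIntegral_nonneg measurableSet_Ioc (fun s _ => hq0 τ s)
    have hg₃0 : 0 ≤ A₃ * τ + (h ^ (γ - 1) * ((Real.Gamma γ)⁻¹ * ∫ s in Ioc (0:ℝ) T, q τ s)
        + B₃ * (h ^ γ / γ)) := by
      have h1 : (0:ℝ) ≤ h ^ (γ - 1) := Real.rpow_nonneg hh.le _
      have h2 : (0:ℝ) ≤ h ^ γ := Real.rpow_nonneg hh.le _
      exact add_nonneg (mul_nonneg hA₃0 hτ0.le)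
        (add_nonneg (mul_nonneg h1 (mul_nonneg hΓi hIq0))
          (mul_nonneg hB₃0 (div_nonneg h2 hγ0.le)))
    have hec : ContinuousOn (fun t => τ⁻¹ • (Y τ t - y t) - δy t) (Icc 0 T) :=
      ((hYc.sub hyc).const_smul τ⁻¹).sub hδyc
    have main : ∀ t ∈ Icc (0:ℝ) T, ‖τ⁻¹ • (Y τ t - y t) - δy t‖ ≤
        (A₃ * τ + (h ^ (γ - 1) * ((Real.Gamma γ)⁻¹ * ∫ s in Ioc (0:ℝ) T, q τ s)
          + B₃ * (h ^ γ / γ))) +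
        b₃ * ∫ s in (0:ℝ)..t, (t - s) ^ (γ - 1) * ‖τ⁻¹ • (Y τ s - y s) - δy s‖ := by
      intro t ht
      -- measurability
      have hFm1 : AEStronglyMeasurable (fun s => (Real.Gamma γ)⁻¹ •
          f (mv (a s + τ • δa s) (Y τ s) + (ℓ s + τ • δℓ s)))
          (volume.restrict (Ioc 0 t)) :=
        (hfc.comp_aestronglyMeasurable ((S6.mv_comp_aesm
          (ha.aestronglyMeasurable.add (hδa.aestronglyMeasurable.const_smul τ))
          (S6.contOn_aesm ht hYc)).add
          (hℓ.aestronglyMeasurable.add (hδℓ.aestronglyMeasurable.const_smul τ)))).const_smul (Real.Gamma γ)⁻¹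
      have hFm2 : AEStronglyMeasurable (fun s => (Real.Gamma γ)⁻¹ • f (z s))
          (volume.restrict (Ioc 0 t)) :=
        (hfc.comp_aestronglyMeasurable (hzT.mono_measure (hres ht))).const_smul (Real.Gamma γ)⁻¹
      have hFm12 : AEStronglyMeasurable (fun s => (Real.Gamma γ)⁻¹ •
          (f (mv (a s + τ • δa s) (Y τ s) + (ℓ s + τ • δℓ s)) - f (z s)))
          (volume.restrict (Ioc 0 t)) := by
        refine (hFm1.sub hFm2).congr ?_
        filter_upwards with s
        simp only [Pi.sub_apply]
        rw [smul_sub]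
      have hFm3 : AEStronglyMeasurable (fun s => (Real.Gamma γ)⁻¹ • f' (z s) (d s))
          (volume.restrict (Ioc 0 t)) :=
        (hf'T.mono_measure (hres ht)).const_smul (Real.Gamma γ)⁻¹
      -- integrability
      have hI1 : IntervalIntegrable (fun s => (t - s) ^ (γ - 1) •
          ((Real.Gamma γ)⁻¹ • f (mv (a s + τ • δa s) (Y τ s) + (ℓ s + τ • δℓ s))))
          volume 0 t := by
        apply S6.ker_smul_ii hγ' ht.1 hFm1
          (M := (Real.Gamma γ)⁻¹ * (‖f 0‖ + L * (2 * C * M₁ + 2 * C)))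
        intro s hs
        have hs' : s ∈ Icc (0:ℝ) T := ⟨hs.1.le, hs.2.trans ht.2⟩
        rw [norm_smul, Real.norm_eq_abs, abs_of_nonneg hΓi]
        apply mul_le_mul_of_nonneg_left _ hΓi
        refine (hfub _).trans ?_
        have h1 := (hzτb τ hτ s hs').trans
          (by nlinarith [hstep1 τ hτ s hs', hC0.le] :
            2 * C * ‖Y τ s‖ + 2 * C ≤ 2 * C * M₁ + 2 * C)
        nlinarith [hL.le]
      have hI2 : IntervalIntegrable (fun s => (t - s) ^ (γ - 1) •
          ((Real.Gamma γ)⁻¹ • f (z s))) volume 0 t := by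
        apply S6.ker_smul_ii hγ' ht.1 hFm2
          (M := (Real.Gamma γ)⁻¹ * (‖f 0‖ + L * (C * My + C)))
        intro s hs
        have hs' : s ∈ Icc (0:ℝ) T := ⟨hs.1.le, hs.2.trans ht.2⟩
        rw [norm_smul, Real.norm_eq_abs, abs_of_nonneg hΓi]
        apply mul_le_mul_of_nonneg_left _ hΓi
        refine (hfub _).trans ?_
        have h1 := hzb s hs'
        nlinarith [hL.le]
      have hI12 : IntervalIntegrable (fun s => (t - s) ^ (γ - 1) •
          ((Real.Gamma γ)⁻¹ •
            (f (mv (a s + τ • δa s) (Y τ s) + (ℓ s + τ • δℓ s)) - f (z s))))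
          volume 0 t := by
        apply S6.ker_smul_ii hγ' ht.1 hFm12
          (M := (Real.Gamma γ)⁻¹ * (2 * ‖f 0‖ + L * (2 * C * M₁ + 2 * C) + L * (C * My + C)))
        intro s hs
        have hs' : s ∈ Icc (0:ℝ) T := ⟨hs.1.le, hs.2.trans ht.2⟩
        rw [norm_smul, Real.norm_eq_abs, abs_of_nonneg hΓi]
        apply mul_le_mul_of_nonneg_left _ hΓi
        have h1 := (hzτb τ hτ s hs').trans
          (by nlinarith [hstep1 τ hτ s hs', hC0.le] :
            2 * C * ‖Y τ s‖ + 2 * C ≤ 2 * C * M₁ + 2 * C)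
        have h2 := hzb s hs'
        have h3 := hfub (mv (a s + τ • δa s) (Y τ s) + (ℓ s + τ • δℓ s))
        have h4 := hfub (z s)
        calc ‖f (mv (a s + τ • δa s) (Y τ s) + (ℓ s + τ • δℓ s)) - f (z s)‖
            ≤ ‖f (mv (a s + τ • δa s) (Y τ s) + (ℓ s + τ • δℓ s))‖ + ‖f (z s)‖ :=
              norm_sub_le _ _
          _ ≤ 2 * ‖f 0‖ + L * (2 * C * M₁ + 2 * C) + L * (C * My + C) := by
              nlinarith [hL.le]
      have hI3 : IntervalIntegrable (fun s => (t - s) ^ (γ - 1) •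
          ((Real.Gamma γ)⁻¹ • f' (z s) (d s))) volume 0 t := by
        apply S6.ker_smul_ii hγ' ht.1 hFm3 (M := (Real.Gamma γ)⁻¹ * (L * Md))
        intro s hs
        have hs' : s ∈ Icc (0:ℝ) T := ⟨hs.1.le, hs.2.trans ht.2⟩
        rw [norm_smul, Real.norm_eq_abs, abs_of_nonneg hΓi]
        apply mul_le_mul_of_nonneg_left _ hΓi
        exact (S6.f'_norm_le hL hf hf' _ _).trans
          (mul_le_mul_of_nonneg_left (hdb s hs') hL.le)
      -- difference of equations
      have hdiff : Y τ t - y t = ∫ s in (0:ℝ)..t, (t - s) ^ (γ - 1) •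
          ((Real.Gamma γ)⁻¹ •
            (f (mv (a s + τ • δa s) (Y τ s) + (ℓ s + τ • δℓ s)) - f (z s))) := by
        rw [hYeq t ht, hyeq t ht, add_sub_add_left_eq_sub]
        simp only [S6.div_smul_eq]
        rw [eq_comm]
        calc (∫ s in (0:ℝ)..t, (t - s) ^ (γ - 1) • ((Real.Gamma γ)⁻¹ •
              (f (mv (a s + τ • δa s) (Y τ s) + (ℓ s + τ • δℓ s)) - f (z s))))
            = ∫ s in (0:ℝ)..t,
              ((t - s) ^ (γ - 1) • ((Real.Gamma γ)⁻¹ •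
                f (mv (a s + τ • δa s) (Y τ s) + (ℓ s + τ • δℓ s))) -
               (t - s) ^ (γ - 1) • ((Real.Gamma γ)⁻¹ • f (z s))) := by
              congr 1
              funext s
              rw [← smul_sub, ← smul_sub]
          _ = _ := intervalIntegral.integral_sub hI1 hI2
      -- equation for the error
      have heeq : τ⁻¹ • (Y τ t - y t) - δy t = ∫ s in (0:ℝ)..t, (t - s) ^ (γ - 1) •
          (τ⁻¹ • ((Real.Gamma γ)⁻¹ •
              (f (mv (a s + τ • δa s) (Y τ s) + (ℓ s + τ • δℓ s)) - f (z s))) -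
            (Real.Gamma γ)⁻¹ • f' (z s) (d s)) := by
        rw [hdiff, hδyeq t ht]
        simp only [S6.div_smul_eq]
        rw [eq_comm]
        calc (∫ s in (0:ℝ)..t, (t - s) ^ (γ - 1) •
              (τ⁻¹ • ((Real.Gamma γ)⁻¹ •
                  (f (mv (a s + τ • δa s) (Y τ s) + (ℓ s + τ • δℓ s)) - f (z s))) -
                (Real.Gamma γ)⁻¹ • f' (z s) (d s)))
            = ∫ s in (0:ℝ)..t,
              (τ⁻¹ • ((t - s) ^ (γ - 1) • ((Real.Gamma γ)⁻¹ •
                  (f (mv (a s + τ • δa s) (Y τ s) + (ℓ s + τ • δℓ s)) - f (z s)))) -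
                (t - s) ^ (γ - 1) • ((Real.Gamma γ)⁻¹ • f' (z s) (d s))) := by
              congr 1
              funext s
              rw [smul_sub, smul_comm]
          _ = (∫ s in (0:ℝ)..t, τ⁻¹ • ((t - s) ^ (γ - 1) • ((Real.Gamma γ)⁻¹ •
                  (f (mv (a s + τ • δa s) (Y τ s) + (ℓ s + τ • δℓ s)) - f (z s))))) -
              ∫ s in (0:ℝ)..t, (t - s) ^ (γ - 1) • ((Real.Gamma γ)⁻¹ • f' (z s) (d s)) :=
            intervalIntegral.integral_sub (hI12.smul τ⁻¹) hI3
          _ = _ := by rw [intervalIntegral.integral_smul]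
      rw [heeq]
      -- pointwise bound and kernel estimate
      have hbnd : ‖∫ s in (0:ℝ)..t, (t - s) ^ (γ - 1) •
          (τ⁻¹ • ((Real.Gamma γ)⁻¹ •
              (f (mv (a s + τ • δa s) (Y τ s) + (ℓ s + τ • δℓ s)) - f (z s))) -
            (Real.Gamma γ)⁻¹ • f' (z s) (d s))‖ ≤
          ((Real.Gamma γ)⁻¹ * (L * (C * M₂)) * τ) * (T ^ γ / γ) +
            b₃ * (∫ s in (0:ℝ)..t, (t - s) ^ (γ - 1) *
              ‖τ⁻¹ • (Y τ s - y s) - δy s‖)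
              + ∫ s in (0:ℝ)..t, (t - s) ^ (γ - 1) * ((Real.Gamma γ)⁻¹ * q τ s) := by
        have hFm4 : AEStronglyMeasurable (fun s => τ⁻¹ • ((Real.Gamma γ)⁻¹ •
            (f (mv (a s + τ • δa s) (Y τ s) + (ℓ s + τ • δℓ s)) - f (z s))) -
            (Real.Gamma γ)⁻¹ • f' (z s) (d s)) (volume.restrict (Ioc 0 t)) := by
          refine ((hFm12.const_smul τ⁻¹).sub hFm3).congr ?_
          filter_upwards with s
          simp only [Pi.sub_apply, Pi.smul_apply]
        apply S6.ker_norm_bound ⟨hγ0, hγ1⟩ ht hFm4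
          (mul_nonneg (by positivity) hτ0.le) hb₃0
          (R := (Real.Gamma γ)⁻¹ * (2 * L * Md)) (by positivity) hec.norm
          (fun s _ => norm_nonneg _)
          (((hq_aesm τ).mono_measure (hres ht)).const_mul _)
          (fun s _ => mul_nonneg hΓi (hq0 τ s))
          (fun s hs => mul_le_mul_of_nonneg_left
            (hqR τ hτ0 s ⟨hs.1.le, hs.2.trans ht.2⟩) hΓi)
        intro s hs
        have hs' : s ∈ Icc (0:ℝ) T := ⟨hs.1.le, hs.2.trans ht.2⟩
        -- algebraic identity for the argument difference
        have hid2 : (mv (a s + τ • δa s) (Y τ s) + (ℓ s + τ • δℓ s)) - (z s + τ • d s)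
            = mv (a s) ((Y τ s - y s) - τ • δy s) + τ • mv (δa s) (Y τ s - y s) := by
          simp only [hzdef, hddef]
          simp only [S6.mv_add_left, S6.mv_smul_left, S6.mv_sub_right, S6.mv_smul_right,
            smul_add, smul_sub]
          abel
        have hτe : (Y τ s - y s) - τ • δy s = τ • (τ⁻¹ • (Y τ s - y s) - δy s) := by
          rw [smul_sub, smul_smul, mul_inv_cancel₀ hτ0.ne', one_smul]
        have hnd : ‖(mv (a s + τ • δa s) (Y τ s) + (ℓ s + τ • δℓ s)) - (z s + τ • d s)‖ ≤
            τ * (C * ‖τ⁻¹ • (Y τ s - y s) - δy s‖) + τ * (C * (M₂ * τ)) := by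
          rw [hid2, hτe]
          calc ‖mv (a s) (τ • (τ⁻¹ • (Y τ s - y s) - δy s)) + τ • mv (δa s) (Y τ s - y s)‖
              ≤ ‖mv (a s) (τ • (τ⁻¹ • (Y τ s - y s) - δy s))‖ +
                ‖τ • mv (δa s) (Y τ s - y s)‖ := norm_add_le _ _
            _ ≤ τ * (C * ‖τ⁻¹ • (Y τ s - y s) - δy s‖) + τ * (C * (M₂ * τ)) := by
                apply add_le_add
                · rw [S6.mv_smul_right, norm_smul, Real.norm_eq_abs, abs_of_pos hτ0]
                  apply mul_le_mul_of_nonneg_left _ hτ0.le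
                  exact (S6.mv_norm_le _ _).trans
                    (mul_le_mul_of_nonneg_right (hCa s hs') (norm_nonneg _))
                · rw [norm_smul, Real.norm_eq_abs, abs_of_pos hτ0]
                  apply mul_le_mul_of_nonneg_left _ hτ0.le
                  refine (S6.mv_norm_le _ _).trans ?_
                  calc ‖δa s‖ * ‖Y τ s - y s‖ ≤ C * (M₂ * τ) :=
                      mul_le_mul (hCda s hs') (hstep2 τ hτ s hs') (norm_nonneg _) hC0.le
            _ = _ := by ring
        -- split the integrand
        have hsplit2 : τ⁻¹ • ((Real.Gamma γ)⁻¹ •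
              (f (mv (a s + τ • δa s) (Y τ s) + (ℓ s + τ • δℓ s)) - f (z s))) -
            (Real.Gamma γ)⁻¹ • f' (z s) (d s)
            = (Real.Gamma γ)⁻¹ •
              (τ⁻¹ • (f (mv (a s + τ • δa s) (Y τ s) + (ℓ s + τ • δℓ s)) -
                  f (z s + τ • d s)) +
               (τ⁻¹ • (f (z s + τ • d s) - f (z s)) - f' (z s) (d s))) := by
          rw [smul_comm τ⁻¹, ← smul_sub]
          congr 1
          rw [smul_sub, smul_sub, smul_sub]
          abel
        rw [hsplit2]
        have hterm1 : ‖τ⁻¹ • (f (mv (a s + τ • δa s) (Y τ s) + (ℓ s + τ • δℓ s)) -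
            f (z s + τ • d s))‖ ≤ L * (C * ‖τ⁻¹ • (Y τ s - y s) - δy s‖) + L * (C * (M₂ * τ)) := by
          rw [norm_smul, Real.norm_eq_abs, abs_of_pos (inv_pos.mpr hτ0)]
          calc τ⁻¹ * ‖f (mv (a s + τ • δa s) (Y τ s) + (ℓ s + τ • δℓ s)) -
                f (z s + τ • d s)‖
              ≤ τ⁻¹ * (L * ‖(mv (a s + τ • δa s) (Y τ s) + (ℓ s + τ • δℓ s)) -
                  (z s + τ • d s)‖) :=
                mul_le_mul_of_nonneg_left (hf _ _) (inv_nonneg.mpr hτ0.le)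
            _ ≤ τ⁻¹ * (L * (τ * (C * ‖τ⁻¹ • (Y τ s - y s) - δy s‖) + τ * (C * (M₂ * τ)))) := by
                apply mul_le_mul_of_nonneg_left _ (inv_nonneg.mpr hτ0.le)
                exact mul_le_mul_of_nonneg_left hnd hL.le
            _ = L * (C * ‖τ⁻¹ • (Y τ s - y s) - δy s‖) + L * (C * (M₂ * τ)) := by
                field_simp
        calc ‖(Real.Gamma γ)⁻¹ •
            (τ⁻¹ • (f (mv (a s + τ • δa s) (Y τ s) + (ℓ s + τ • δℓ s)) -
                f (z s + τ • d s)) +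
             (τ⁻¹ • (f (z s + τ • d s) - f (z s)) - f' (z s) (d s)))‖
            = (Real.Gamma γ)⁻¹ * ‖τ⁻¹ • (f (mv (a s + τ • δa s) (Y τ s) + (ℓ s + τ • δℓ s)) -
                f (z s + τ • d s)) +
               (τ⁻¹ • (f (z s + τ • d s) - f (z s)) - f' (z s) (d s))‖ := by
              rw [norm_smul, Real.norm_eq_abs, abs_of_nonneg hΓi]
          _ ≤ (Real.Gamma γ)⁻¹ *
              ((L * (C * ‖τ⁻¹ • (Y τ s - y s) - δy s‖) + L * (C * (M₂ * τ))) + q τ s) := by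
              apply mul_le_mul_of_nonneg_left _ hΓi
              refine (norm_add_le _ _).trans ?_
              exact add_le_add hterm1 le_rfl
          _ = ((Real.Gamma γ)⁻¹ * (L * (C * M₂)) * τ) +
              b₃ * ‖τ⁻¹ • (Y τ s - y s) - δy s‖ + (Real.Gamma γ)⁻¹ * q τ s := by
              rw [hb₃def]; ring
      -- use the splitting estimate on the remainder integral
      have hsplitq : (∫ s in (0:ℝ)..t, (t - s) ^ (γ - 1) * ((Real.Gamma γ)⁻¹ * q τ s)) ≤
          h ^ (γ - 1) * ((Real.Gamma γ)⁻¹ * ∫ s in Ioc (0:ℝ) T, q τ s) + B₃ * (h ^ γ / γ) := by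
        have hmain := S6.split_est ⟨hγ0, hγ1⟩ hT ht
          (r := fun s => (Real.Gamma γ)⁻¹ * q τ s)
          (((hq_aesm τ)).const_mul _) hh (R := (Real.Gamma γ)⁻¹ * (2 * L * Md))
          (by positivity)
          (fun s _ => mul_nonneg hΓi (hq0 τ s))
          (fun s hs => mul_le_mul_of_nonneg_left (hqR τ hτ0 s ⟨hs.1.le, hs.2⟩) hΓi)
        have hpull : (∫ s in Ioc (0:ℝ) T, (Real.Gamma γ)⁻¹ * q τ s) =
            (Real.Gamma γ)⁻¹ * ∫ s in Ioc (0:ℝ) T, q τ s :=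
          integral_const_mul _ _
        rw [hpull] at hmain
        rw [hB₃def]
        exact hmain
      have hA₃eq : ((Real.Gamma γ)⁻¹ * (L * (C * M₂)) * τ) * (T ^ γ / γ) = A₃ * τ := by
        rw [hA₃def]; ring
      rw [hA₃eq] at hbnd
      linarith [hbnd, hsplitq]
    exact S6.gronwall ⟨hγ0, hγ1⟩ hT hb₃0 hg₃0 hec.norm (fun t _ => norm_nonneg _) main
  -- choose the kernel-splitting parameter h₀
  have hK₃1 : (0:ℝ) < K₃ + 1 := by linarith
  have hB₃1 : (0:ℝ) < B₃ + 1 := by linarith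
  have hA₃1 : (0:ℝ) < A₃ + 1 := by linarith
  have hX0 : 0 < ε * γ / (3 * (K₃ + 1) * (B₃ + 1)) := by positivity
  set h₀ : ℝ := min T ((ε * γ / (3 * (K₃ + 1) * (B₃ + 1))) ^ (γ⁻¹)) with hh₀def
  have hh₀ : 0 < h₀ := lt_min hT (Real.rpow_pos_of_pos hX0 _)
  have hh₀γ : h₀ ^ γ ≤ ε * γ / (3 * (K₃ + 1) * (B₃ + 1)) := by
    calc h₀ ^ γ ≤ ((ε * γ / (3 * (K₃ + 1) * (B₃ + 1))) ^ (γ⁻¹)) ^ γ :=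
        Real.rpow_le_rpow hh₀.le (min_le_right _ _) hγ0.le
      _ = _ := Real.rpow_inv_rpow hX0.le hγ0.ne'
  have hterm3 : K₃ * (B₃ * (h₀ ^ γ / γ)) ≤ ε / 3 := by
    have hP : (0:ℝ) < 3 * (K₃ + 1) * (B₃ + 1) := by positivity
    have h2 : h₀ ^ γ / γ ≤ ε / (3 * (K₃ + 1) * (B₃ + 1)) := by
      rw [div_le_div_iff₀ hγ0 hP]
      calc h₀ ^ γ * (3 * (K₃ + 1) * (B₃ + 1))
          ≤ ε * γ / (3 * (K₃ + 1) * (B₃ + 1)) * (3 * (K₃ + 1) * (B₃ + 1)) :=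
            mul_le_mul_of_nonneg_right hh₀γ hP.le
        _ = ε * γ := by field_simp
    have h4 : K₃ * B₃ ≤ (K₃ + 1) * (B₃ + 1) := by nlinarith
    have h5 : (K₃ + 1) * (B₃ + 1) * (ε / (3 * (K₃ + 1) * (B₃ + 1))) = ε / 3 := by
      field_simp
    have h6 : (0:ℝ) ≤ h₀ ^ γ / γ := div_nonneg (Real.rpow_nonneg hh₀.le _) hγ0.le
    calc K₃ * (B₃ * (h₀ ^ γ / γ)) = K₃ * B₃ * (h₀ ^ γ / γ) := by ring
      _ ≤ K₃ * B₃ * (ε / (3 * (K₃ + 1) * (B₃ + 1))) :=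
          mul_le_mul_of_nonneg_left h2 (mul_nonneg hK₃0 hB₃0)
      _ ≤ (K₃ + 1) * (B₃ + 1) * (ε / (3 * (K₃ + 1) * (B₃ + 1))) :=
          mul_le_mul_of_nonneg_right h4 (by positivity)
      _ = ε / 3 := h5
  set η₁ : ℝ := ε / (3 * (K₃ + 1) * (A₃ + 1)) with hη₁def
  have hη₁ : 0 < η₁ := by positivity
  have hterm1 : ∀ τ : ℝ, 0 < τ → τ ≤ η₁ → K₃ * (A₃ * τ) ≤ ε / 3 := by
    intro τ h0 h1
    have h4 : K₃ * A₃ ≤ (K₃ + 1) * (A₃ + 1) := by nlinarith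
    calc K₃ * (A₃ * τ) = K₃ * A₃ * τ := by ring
      _ ≤ (K₃ + 1) * (A₃ + 1) * η₁ := mul_le_mul h4 h1 h0.le (by positivity)
      _ = ε / 3 := by rw [hη₁def]; field_simp
  set D : ℝ := h₀ ^ (γ - 1) * (Real.Gamma γ)⁻¹ with hDdef
  have hD0 : 0 ≤ D := mul_nonneg (Real.rpow_nonneg hh₀.le _) hΓi
  set η₂ : ℝ := ε / (3 * (K₃ + 1) * (D + 1)) with hη₂def
  have hη₂ : 0 < η₂ := by positivity
  have hterm2 : ∀ I : ℝ, 0 ≤ I → I ≤ η₂ →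
      K₃ * (h₀ ^ (γ - 1) * ((Real.Gamma γ)⁻¹ * I)) ≤ ε / 3 := by
    intro I h0 h1
    have hKD : K₃ * D ≤ (K₃ + 1) * (D + 1) := by nlinarith
    calc K₃ * (h₀ ^ (γ - 1) * ((Real.Gamma γ)⁻¹ * I)) = K₃ * D * I := by rw [hDdef]; ring
      _ ≤ (K₃ + 1) * (D + 1) * η₂ := mul_le_mul hKD h1 h0 (by positivity)
      _ = ε / 3 := by rw [hη₂def]; field_simp
  -- choose the threshold τ₀
  have hev : ∀ᶠ τ in 𝓝[>] (0:ℝ), τ ∈ Ioc (0:ℝ) 1 ∧ τ ≤ η₁ ∧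
      (∫ s in Ioc (0:ℝ) T, q τ s) ≤ η₂ := by
    have e1 : ∀ᶠ τ in 𝓝[>] (0:ℝ), τ ∈ Ioc (0:ℝ) 1 := by
      filter_upwards [Ioo_mem_nhdsGT_of_mem
        (show (0:ℝ) ∈ Ico (0:ℝ) 1 from ⟨le_refl 0, zero_lt_one⟩)] with τ hτ
      exact ⟨hτ.1, hτ.2.le⟩
    have e2 : ∀ᶠ τ in 𝓝[>] (0:ℝ), τ ≤ η₁ := by
      filter_upwards [Ioo_mem_nhdsGT_of_mem
        (show (0:ℝ) ∈ Ico (0:ℝ) η₁ from ⟨le_refl 0, hη₁⟩)] with τ hτ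
      exact hτ.2.le
    have e3 : ∀ᶠ τ in 𝓝[>] (0:ℝ), (∫ s in Ioc (0:ℝ) T, q τ s) ≤ η₂ := by
      filter_upwards [hIconv.eventually_lt_const hη₂] with τ h using h.le
    filter_upwards [e1, e2, e3] with τ h1 h2 h3
    exact ⟨h1, h2, h3⟩
  obtain ⟨u₀, hu₀mem, hu₀sub⟩ := mem_nhdsGT_iff_exists_Ioo_subset.mp hev
  refine ⟨u₀, hu₀mem, ?_⟩
  intro τ hτmem t ht
  obtain ⟨hτ1, hτη₁, hτη₂⟩ := hu₀sub hτmem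
  have hτ0 : 0 < τ := hτmem.1
  have hkey := key τ hτ1 h₀ hh₀ t ht
  have hIτ0 : 0 ≤ ∫ s in Ioc (0:ℝ) T, q τ s :=
    setIntegral_nonneg measurableSet_Ioc (fun s _ => hq0 τ s)
  calc ‖τ⁻¹ • (Y τ t - y t) - δy t‖
      ≤ K₃ * (A₃ * τ + (h₀ ^ (γ - 1) * ((Real.Gamma γ)⁻¹ * ∫ s in Ioc (0:ℝ) T, q τ s)
          + B₃ * (h₀ ^ γ / γ))) := hkey
    _ = K₃ * (A₃ * τ) + K₃ * (h₀ ^ (γ - 1) * ((Real.Gamma γ)⁻¹ * ∫ s in Ioc (0:ℝ) T, q τ s))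
        + K₃ * (B₃ * (h₀ ^ γ / γ)) := by ring
    _ ≤ ε / 3 + ε / 3 + ε / 3 :=
        add_le_add (add_le_add (hterm1 τ hτ0 hτη₁)
          (hterm2 _ hIτ0 hτη₂)) hterm3
    _ = ε := by ring
end
end
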